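/- Let ν be an infinite regular cardinal with ν^{<ν} = ν and let A ⊆ ν^ν. Player II has a winning strategy in the Banach–Mazur game G_ν(A) if and only if there is a dense continuous homomorphism f : ν^{<ν} → ν^{<ν} with ran(f*) ⊆ ν^ν ∖ A and f(∅) = ∅. -/

import Mathlib

universe u

noncomputable section

/-! ## Sequences of ordinals

`SeqLT o v` is the set `v^{<o}` of all sequences of ordinals `< v` of length `< o`
(for `o > 0`; values beyond the length are normalized to `0`).
`SeqFull o v` is the generalized Baire space `v^o` of all functions from ordinals `< o`
to ordinals `< v`. -/

/-- An element of `v^{<o}`: a sequence of ordinals `< v` of length `< o`. -/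
structure SeqLT (o v : Ordinal.{u}) : Type (u + 1) where
  len : Ordinal.{u}
  len_lt : len < o ⊔ 1
  val : Ordinal.{u} → Ordinal.{u}
  val_lt : ∀ β, β < len → val β < v
  val_zero : ∀ β, len ≤ β → val β = 0

namespace SeqLT

variable {o v : Ordinal.{u}}

/-- `s ⊆ t`, i.e. `t` end-extends `s`. -/
protected def le (s t : SeqLT o v) : Prop :=
  s.len ≤ t.len ∧ ∀ β, β < s.len → s.val β = t.val β

/-- `s ⊊ t`, i.e. `t` properly end-extends `s`. -/
protected def slt (s t : SeqLT o v) : Prop :=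
  s.le t ∧ s.len < t.len

/-- The empty sequence. -/
protected def empty (o v : Ordinal.{u}) : SeqLT o v where
  len := 0
  len_lt := lt_sup_iff.mpr (Or.inr zero_lt_one)
  val := fun _ => 0
  val_lt := fun β h => absurd h (not_lt.mpr (zero_le : (0 : Ordinal.{u}) ≤ β))
  val_zero := fun _ _ => rfl

/-- `s⌢⟨β⟩`: the sequence `s` extended by the single value `β`. -/
def snoc (s : SeqLT o v) (β : Ordinal.{u}) : SeqLT o v :=
  if h : s.len + 1 < o ⊔ 1 ∧ β < v then
    { len := s.len + 1
      len_lt := h.1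
      val := fun γ => if γ = s.len then β else s.val γ
      val_lt := fun γ hγ => by
        rcases eq_or_ne γ s.len with rfl | hne
        · simpa using h.2
        · simp only [if_neg hne]
          refine s.val_lt γ (lt_of_le_of_ne ?_ hne)
          rw [Ordinal.add_one_eq_succ] at hγ
          exact Order.lt_succ_iff.mp hγ
      val_zero := fun γ hγ => by
        have h1 : s.len < γ :=
          lt_of_lt_of_le (by rw [Ordinal.add_one_eq_succ]; exact Order.lt_succ s.len) hγ
        simp only [if_neg h1.ne']
        exact s.val_zero γ h1.le }
  else s

protected theorem le_refl (s : SeqLT o v) : s.le s :=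
  ⟨le_rfl, fun _ _ => rfl⟩

protected theorem le_trans {s t u : SeqLT o v} (h1 : s.le t) (h2 : t.le u) : s.le u :=
  ⟨h1.1.trans h2.1, fun β hβ => (h1.2 β hβ).trans (h2.2 β (lt_of_lt_of_le hβ h1.1))⟩

end SeqLT

/-- An element of the generalized Baire space `v^o`. -/
structure SeqFull (o v : Ordinal.{u}) : Type (u + 1) where
  val : Ordinal.{u} → Ordinal.{u}
  val_lt : ∀ β, β < o → val β < v
  val_zero : ∀ β, o ≤ β → val β = 0

/-- The restriction `x ↾ β` of `x : v^o` to an ordinal `β < o`. -/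
def SeqFull.res {o v : Ordinal.{u}} (x : SeqFull o v) (β : Ordinal.{u}) : SeqLT o v :=
  if h : β < o ⊔ 1 then
    { len := β
      len_lt := h
      val := fun γ => if γ < β then x.val γ else 0
      val_lt := fun γ hγ => by
        simp only [if_pos hγ]
        rcases lt_sup_iff.mp h with h' | h'
        · exact x.val_lt γ (hγ.trans h')
        · rw [Ordinal.lt_one_iff_zero] at h'
          exact absurd (h' ▸ hγ) (not_lt.mpr (zero_le : (0 : Ordinal.{u}) ≤ γ))
      val_zero := fun γ hγ => if_neg (not_lt.mpr hγ) }
  else SeqLT.empty o v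

/-- `s ⊆ x`: the sequence `s` is an initial segment of `x : v^o`. -/
def SeqLT.prefixOf {o v : Ordinal.{u}} (s : SeqLT o v) (x : SeqFull o v) : Prop :=
  ∀ β, β < s.len → s.val β = x.val β

/-! ## The bounded topology -/

/-- The basic open set `N_t`. -/
def basicOpen {o v : Ordinal.{u}} (t : SeqLT o v) : Set (SeqFull o v) :=
  {x | t.prefixOf x}

/-- The bounded (standard) topology on the generalized Baire space, generated by the
basic open sets `N_t`. -/
instance (o v : Ordinal.{u}) : TopologicalSpace (SeqFull o v) :=
  TopologicalSpace.generateFrom {U | ∃ t : SeqLT o v, U = basicOpen t}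

/-- `A` is a nowhere dense subset of `B` (in the subspace topology on `B`). -/
def NowhereDenseIn {o v : Ordinal.{u}} (A B : Set (SeqFull o v)) : Prop :=
  A ⊆ B ∧ interior (closure {x : ↥B | (x : SeqFull o v) ∈ A}) = ∅

/-- `A` is `o`-meager in `B`: `A ∩ B` is the union of (card of) `o` many nowhere dense
subsets of `B`. -/
def MeagerIn {o v : Ordinal.{u}} (A B : Set (SeqFull o v)) : Prop :=
  ∃ F : {β : Ordinal.{u} // β < o} → Set (SeqFull o v),
    (∀ i, NowhereDenseIn (F i) B) ∧ A ∩ B = ⋃ i, F i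

/-- `A` is comeager in `B`: `B \ A` is meager in `B`. -/
def ComeagerIn {o v : Ordinal.{u}} (A B : Set (SeqFull o v)) : Prop :=
  MeagerIn (B \ A) B

/-- `A` has the `o`-Baire property: for some open `U`, `A △ U` is meager. -/
def BaireSet {o v : Ordinal.{u}} (A : Set (SeqFull o v)) : Prop :=
  ∃ U : Set (SeqFull o v), IsOpen U ∧ MeagerIn (symmDiff A U) Set.univ

/-! ## Homomorphisms of `v^{<o}` -/

/-- A homomorphism: strictly extension-preserving map of `v^{<o}` to itself. -/
def IsHom {o v : Ordinal.{u}} (f : SeqLT o v → SeqLT o v) : Prop :=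
  ∀ s t : SeqLT o v, s.slt t → (f s).slt (f t)

/-- `f` is dense: for every `s` and every `t ⊇ f(s)` there is `β < v` with
`f(s⌢⟨β⟩) ⊇ t`. -/
def IsDenseMap {o v : Ordinal.{u}} (f : SeqLT o v → SeqLT o v) : Prop :=
  ∀ s t : SeqLT o v, (f s).le t → ∃ β, β < v ∧ t.le (f (s.snoc β))

/-- `u = ⋃_{α<γ} s α` for a chain `s`. -/
def IsUnionOfChain {o v : Ordinal.{u}} (u : SeqLT o v) (γ : Ordinal.{u})
    (s : Ordinal.{u} → SeqLT o v) : Prop :=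
  (∀ α, α < γ → (s α).le u) ∧ ∀ β, β < u.len → ∃ α, α < γ ∧ β < (s α).len

/-- `f` is continuous: for every limit `γ < o` and every strictly increasing sequence
`⟨s_α : α < γ⟩`, `f(⋃_{α<γ} s_α) = ⋃_{α<γ} f(s_α)`. -/
def IsContinuousMap {o v : Ordinal.{u}} (f : SeqLT o v → SeqLT o v) : Prop :=
  ∀ γ : Ordinal.{u}, Order.IsSuccLimit γ → γ < o →
    ∀ s : Ordinal.{u} → SeqLT o v, (∀ α β, α < β → β < γ → (s α).slt (s β)) →
      ∀ u : SeqLT o v, IsUnionOfChain u γ s → IsUnionOfChain (f u) γ fun α => f (s α)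

/-- `y = f*(x) = ⋃_{α<o} f(x↾α)` for a homomorphism `f`. -/
def FStarVal {o v : Ordinal.{u}} (f : SeqLT o v → SeqLT o v) (x y : SeqFull o v) : Prop :=
  (∀ α, α < o → (f (x.res α)).prefixOf y) ∧
    ∀ β, β < o → ∃ α, α < o ∧ β < (f (x.res α)).len

/-! ## Clubs and the almost Baire property -/

/-- `C` is a club (closed unbounded set) in the ordinal `o`. -/
def IsClubIn (C : Set Ordinal.{u}) (o : Ordinal.{u}) : Prop :=
  (∀ γ ∈ C, γ < o) ∧ (∀ β, β < o → ∃ γ ∈ C, β ≤ γ) ∧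
    ∀ β, β < o → 0 < β → (∀ γ, γ < β → ∃ ξ ∈ C, γ < ξ ∧ ξ < β) → β ∈ C

/-- The set of functions coding elements of the club filter as characteristic functions. -/
def ClSet (o v : Ordinal.{u}) : Set (SeqFull o v) :=
  {x | ∃ C : Set Ordinal.{u}, IsClubIn C o ∧ ∀ i ∈ C, x.val i ≠ 0}

/-- The set of functions coding elements of the nonstationary ideal. -/
def NsSet (o v : Ordinal.{u}) : Set (SeqFull o v) :=
  {x | ∃ C : Set Ordinal.{u}, IsClubIn C o ∧ ∀ i ∈ C, x.val i = 0}

/-- `A` is almost Baire: there is a dense homomorphism `f` with `ran f* ⊆ A`, or a dense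
continuous homomorphism `f` with `f ∅ = ∅` and `ran f* ⊆ Aᶜ`. -/
def AlmostBaire {o v : Ordinal.{u}} (A : Set (SeqFull o v)) : Prop :=
  ∃ f : SeqLT o v → SeqLT o v, IsHom f ∧ IsDenseMap f ∧
    ((∀ x y, FStarVal f x y → y ∈ A) ∨
      ((∀ x y, FStarVal f x y → y ∉ A) ∧ IsContinuousMap f ∧
        f (SeqLT.empty o v) = SeqLT.empty o v))

/-! ## Banach–Mazur games of length `o`

A run of the game is a strictly increasing sequence `⟨s_α : α < o⟩` in `v^{<o}`;
player I plays at even positions (`0` and limits count as even), player II at odd ones.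
In the game `G^t` the first move of player I must extend `t`; taking `t = ∅` gives the
plain Banach–Mazur game. -/

/-- `γ` is an even ordinal (`0` and limits are even). -/
def EvenOrd (γ : Ordinal.{u}) : Prop := ∃ δ : Ordinal.{u}, γ = 2 * δ

/-- `γ` is an odd ordinal. -/
def OddOrd (γ : Ordinal.{u}) : Prop := ∃ δ : Ordinal.{u}, γ = 2 * δ + 1

/-- The moves of a (partial) run, as a function on ordinals. -/
abbrev Play (o v : Ordinal.{u}) := Ordinal.{u} → SeqLT o v

/-- A strategy: given the length of the current position and the moves so far,
produce the next move. -/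
abbrev Strat (o v : Ordinal.{u}) := Ordinal.{u} → Play o v → SeqLT o v

/-- `p` is a legal partial run of length `γ` of the game `G^t`: strictly increasing moves,
the first move extends `t`, and the moves beyond `γ` are normalized to `∅`. -/
def IsPos {o v : Ordinal.{u}} (t : SeqLT o v) (p : Play o v) (γ : Ordinal.{u}) : Prop :=
  (∀ α β, α < β → β < γ → (p α).slt (p β)) ∧ (0 < γ → t.le (p 0)) ∧
    ∀ α, γ ≤ α → p α = SeqLT.empty o v

/-- The restriction of a run to its first `γ` moves. -/
def resPlay {o v : Ordinal.{u}} (p : Play o v) (γ : Ordinal.{u}) : Play o v :=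
  fun α => if α < γ then p α else SeqLT.empty o v

/-- `m` is a legal move at the position `p` of length `γ` in the game `G^t`. -/
def MoveOK {o v : Ordinal.{u}} (t : SeqLT o v) (p : Play o v) (γ : Ordinal.{u})
    (m : SeqLT o v) : Prop :=
  (∀ α, α < γ → (p α).slt m) ∧ (γ = 0 → t.le m)

/-- `σ` is a strategy for player I in `G^t`: it assigns a legal move to every legal
position of even length. -/
def LegalI {o v : Ordinal.{u}} (t : SeqLT o v) (σ : Strat o v) : Prop :=
  ∀ γ, γ < o → EvenOrd γ → ∀ p, IsPos t p γ → MoveOK t p γ (σ γ p)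

/-- `σ` is a strategy for player II in `G^t`: it assigns a legal move to every legal
position of odd length. -/
def LegalII {o v : Ordinal.{u}} (t : SeqLT o v) (σ : Strat o v) : Prop :=
  ∀ γ, γ < o → OddOrd γ → ∀ p, IsPos t p γ → MoveOK t p γ (σ γ p)

/-- The first `γ` moves of `p` follow the strategy `σ` of player I. -/
def FollowsI {o v : Ordinal.{u}} (σ : Strat o v) (p : Play o v) (γ : Ordinal.{u}) : Prop :=
  ∀ α, α < γ → EvenOrd α → p α = σ α (resPlay p α)

/-- The first `γ` moves of `p` follow the strategy `σ` of player II. -/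
def FollowsII {o v : Ordinal.{u}} (σ : Strat o v) (p : Play o v) (γ : Ordinal.{u}) : Prop :=
  ∀ α, α < γ → OddOrd α → p α = σ α (resPlay p α)

/-- `x = ⋃_{α<o} p α` is the outcome of the complete run `p`. -/
def IsOutcome {o v : Ordinal.{u}} (p : Play o v) (x : SeqFull o v) : Prop :=
  (∀ α, α < o → (p α).prefixOf x) ∧ ∀ β, β < o → ∃ α, α < o ∧ β < (p α).len

/-- Player I has a winning strategy in the Banach–Mazur game `G^t(A)` of length `o`. -/
def WinIStrat {o v : Ordinal.{u}} (t : SeqLT o v) (A : Set (SeqFull o v)) : Prop :=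
  ∃ σ : Strat o v, LegalI t σ ∧
    ∀ p : Play o v, IsPos t p o → FollowsI σ p o → ∃ x, IsOutcome p x ∧ x ∈ A

/-- Player II has a winning strategy in the Banach–Mazur game `G^t(A)` of length `o`. -/
def WinIIStrat {o v : Ordinal.{u}} (t : SeqLT o v) (A : Set (SeqFull o v)) : Prop :=
  ∃ σ : Strat o v, LegalII t σ ∧
    ∀ p : Play o v, IsPos t p o → FollowsII σ p o → ∃ x, IsOutcome p x ∧ x ∉ A

/-- `σ` is a tactic for player II: its moves depend only on the union of the previous moves. -/
def IsTacticII {o v : Ordinal.{u}} (t : SeqLT o v) (σ : Strat o v) : Prop :=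
  ∃ f : SeqLT o v → SeqLT o v, ∀ γ, γ < o → OddOrd γ → ∀ p, IsPos t p γ →
    ∀ u, IsUnionOfChain u γ p → σ γ p = f u

/-- Player II has a winning tactic in the Banach–Mazur game `G^t(A)` of length `o`. -/
def WinIITactic {o v : Ordinal.{u}} (t : SeqLT o v) (A : Set (SeqFull o v)) : Prop :=
  ∃ σ : Strat o v, LegalII t σ ∧ IsTacticII t σ ∧
    ∀ p : Play o v, IsPos t p o → FollowsII σ p o → ∃ x, IsOutcome p x ∧ x ∉ A

/-! ## Trees and perfect sets -/

/-- A subtree of `v^{<o}`: a downwards closed set of sequences. -/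
def IsSubtree {o v : Ordinal.{u}} (T : Set (SeqLT o v)) : Prop :=
  ∀ s ∈ T, ∀ r : SeqLT o v, r.le s → r ∈ T

/-- `T` is closed: every strictly increasing sequence in `T` of length `< o` has an
upper bound in `T`. -/
def TreeClosed {o v : Ordinal.{u}} (T : Set (SeqLT o v)) : Prop :=
  ∀ γ : Ordinal.{u}, γ < o → ∀ s : Ordinal.{u} → SeqLT o v,
    (∀ α β, α < β → β < γ → (s α).slt (s β)) → (∀ α, α < γ → s α ∈ T) →
      ∃ b ∈ T, ∀ α, α < γ → (s α).le b

/-- `t` is a direct successor of `s`. -/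
def IsDirectSucc {o v : Ordinal.{u}} (s t : SeqLT o v) : Prop :=
  s.slt t ∧ t.len = s.len + 1

/-- `T` is a perfect tree: a (nonempty) closed subtree whose splitting nodes are cofinal. -/
def IsPerfectTree {o v : Ordinal.{u}} (T : Set (SeqLT o v)) : Prop :=
  T.Nonempty ∧ IsSubtree T ∧ TreeClosed T ∧
    ∀ s ∈ T, ∃ t ∈ T, s.le t ∧
      ∃ t₁ ∈ T, ∃ t₂ ∈ T, IsDirectSucc t t₁ ∧ IsDirectSucc t t₂ ∧ t₁ ≠ t₂

/-- The body `[T]` of a tree `T`: the set of branches of length `o` through `T`. -/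
def treeBody {o v : Ordinal.{u}} (T : Set (SeqLT o v)) : Set (SeqFull o v) :=
  {x | ∀ α, α < o → x.res α ∈ T}

/-! ### Auxiliary development -/

namespace BMAux

open Ordinal Order

/-! #### Ordinal parity -/

theorem otwo_pos : (0 : Ordinal.{u}) < 2 := by norm_num

theorem two_mul_lt_two_mul {δ δ' : Ordinal.{u}} : 2 * δ < 2 * δ' ↔ δ < δ' :=
  mul_lt_mul_iff_of_pos_left otwo_pos

theorem two_mul_le_two_mul {δ δ' : Ordinal.{u}} : 2 * δ ≤ 2 * δ' ↔ δ ≤ δ' :=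
  mul_le_mul_iff_of_pos_left otwo_pos

theorem le_two_mul (δ : Ordinal.{u}) : δ ≤ 2 * δ := by
  conv_lhs => rw [← one_mul δ]
  exact mul_le_mul_left one_le_two δ

theorem two_mul_succ (δ : Ordinal.{u}) : 2 * (δ + 1) = 2 * δ + 2 := by
  rw [mul_add, mul_one]

theorem odd_lt_two_mul {ζ ε : Ordinal.{u}} : 2 * ζ + 1 < 2 * ε ↔ ζ < ε := by
  constructor
  · intro h
    by_contra hc
    push_neg at hc
    have : 2 * ε ≤ 2 * ζ := two_mul_le_two_mul.mpr hc
    have := this.trans_lt (lt_of_lt_of_le (lt_add_one _) le_rfl)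
    exact absurd (h.trans_le (this.le.trans le_rfl)) (lt_irrefl _)
  · intro h
    have h1 : (ζ : Ordinal) + 1 ≤ ε := Order.add_one_le_iff.mpr h
    calc 2 * ζ + 1 < 2 * ζ + 2 := by
          exact_mod_cast add_lt_add_right one_lt_two _
      _ = 2 * (ζ + 1) := (two_mul_succ ζ).symm
      _ ≤ 2 * ε := two_mul_le_two_mul.mpr h1

theorem even_ne_odd {δ δ' : Ordinal.{u}} : 2 * δ ≠ 2 * δ' + 1 := by
  intro h
  have h1 : (2 * δ) % 2 = 0 := Ordinal.mul_mod 2 δ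
  have h2 : (2 * δ' + 1) % 2 = 1 := by
    rw [Ordinal.mul_add_mod_self]
    exact Ordinal.mod_eq_of_lt one_lt_two
  rw [h] at h1
  rw [h1] at h2
  exact one_ne_zero h2.symm

theorem two_mul_inj {δ δ' : Ordinal.{u}} (h : 2 * δ = 2 * δ') : δ = δ' := by
  rcases lt_trichotomy δ δ' with hl | he | hl
  · exact absurd h (two_mul_lt_two_mul.mpr hl).ne
  · exact he
  · exact absurd h.symm (two_mul_lt_two_mul.mpr hl).ne

theorem odd_lt_odd {δ δ' : Ordinal.{u}} (h : δ < δ') : 2 * δ + 1 < 2 * δ' + 1 :=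
  (odd_lt_two_mul.mpr h).trans (lt_add_one _)

theorem odd_inj {δ δ' : Ordinal.{u}} (h : 2 * δ + 1 = 2 * δ' + 1) : δ = δ' := by
  rcases lt_trichotomy δ δ' with hl | he | hl
  · exact absurd h (odd_lt_odd hl).ne
  · exact he
  · exact absurd h.symm (odd_lt_odd hl).ne

theorem even_or_odd (α : Ordinal.{u}) : (∃ δ, α = 2 * δ) ∨ ∃ δ, α = 2 * δ + 1 := by
  have hd := Ordinal.div_add_mod α 2
  have hm : α % 2 < 2 := Ordinal.mod_lt α two_ne_zero
  rcases lt_or_ge (α % 2) 1 with h | h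
  · left
    have h0 : α % 2 = 0 := Ordinal.lt_one_iff_zero.mp h
    refine ⟨α / 2, ?_⟩
    conv_lhs => rw [← hd]
    rw [h0, add_zero]
  · right
    have h2 : (2 : Ordinal) = Order.succ 1 := by rw [← Ordinal.add_one_eq_succ]; norm_num
    have : α % 2 = 1 := le_antisymm (Order.lt_succ_iff.mp (h2 ▸ hm)) h
    refine ⟨α / 2, ?_⟩
    conv_lhs => rw [← hd]
    rw [this]

theorem isLimit_even {γ : Ordinal.{u}} (h : Order.IsSuccLimit γ) : ∃ δ, γ = 2 * δ := by
  rcases even_or_odd γ with h' | ⟨δ, rfl⟩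
  · exact h'
  · have h1 : 2 * δ < 2 * δ + 1 := lt_add_one _
    have h2 := h.succ_lt h1
    rw [← Ordinal.add_one_eq_succ] at h2
    exact absurd h2 (lt_irrefl _)

end BMAux
namespace BMAux

open Ordinal Order

variable {o v : Ordinal.{u}}

/-! #### Basic `SeqLT` lemmas -/

theorem seq_ext {s t : SeqLT o v} (hlen : s.len = t.len)
    (hval : ∀ β, β < s.len → s.val β = t.val β) : s = t := by
  obtain ⟨l1, h1, v1, lt1, z1⟩ := s
  obtain ⟨l2, h2, v2, lt2, z2⟩ := t
  dsimp at hlen hval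
  subst hlen
  have : v1 = v2 := by
    funext β
    rcases lt_or_ge β l1 with h | h
    · exact hval β h
    · rw [z1 β h, z2 β h]
  subst this
  rfl

theorem slt_iff {s t : SeqLT o v} : s.slt t ↔ s.le t ∧ s.len < t.len := Iff.rfl

theorem le_of_slt {s t : SeqLT o v} (h : s.slt t) : s.le t := h.1

theorem eq_of_le_of_len_le {s t : SeqLT o v} (h : s.le t) (h2 : t.len ≤ s.len) : s = t :=
  seq_ext (le_antisymm h.1 h2) h.2

theorem le_iff_slt_or_eq {s t : SeqLT o v} : s.le t ↔ s.slt t ∨ s = t := by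
  constructor
  · intro h
    rcases lt_or_ge s.len t.len with h2 | h2
    · exact Or.inl ⟨h, h2⟩
    · exact Or.inr (eq_of_le_of_len_le h h2)
  · rintro (h | rfl)
    · exact h.1
    · exact SeqLT.le_refl s

theorem slt_trans {s t u : SeqLT o v} (h1 : s.slt t) (h2 : t.slt u) : s.slt u :=
  ⟨SeqLT.le_trans h1.1 h2.1, h1.2.trans h2.2⟩

theorem slt_of_le_of_slt {s t u : SeqLT o v} (h1 : s.le t) (h2 : t.slt u) : s.slt u :=
  ⟨SeqLT.le_trans h1 h2.1, lt_of_le_of_lt h1.1 h2.2⟩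

theorem slt_of_slt_of_le {s t u : SeqLT o v} (h1 : s.slt t) (h2 : t.le u) : s.slt u :=
  ⟨SeqLT.le_trans h1.1 h2, lt_of_lt_of_le h1.2 h2.1⟩

@[simp] theorem empty_len : (SeqLT.empty o v).len = 0 := rfl

@[simp] theorem empty_val (β : Ordinal.{u}) : (SeqLT.empty o v).val β = 0 := rfl

theorem empty_le (s : SeqLT o v) : (SeqLT.empty o v).le s :=
  ⟨zero_le, fun β h => absurd h ((not_lt_zero (a := β)))⟩

theorem eq_empty_of_len_eq_zero {s : SeqLT o v} (h : s.len = 0) : s = SeqLT.empty o v :=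
  seq_ext h (fun β hβ => absurd (h ▸ hβ) ((not_lt_zero (a := β))))

/-! #### `take` -/

/-- Truncation of a sequence. -/
def take (s : SeqLT o v) (β : Ordinal.{u}) : SeqLT o v where
  len := β ⊓ s.len
  len_lt := lt_of_le_of_lt inf_le_right s.len_lt
  val := fun γ => if γ < β ⊓ s.len then s.val γ else 0
  val_lt := fun γ h => by
    show (if γ < β ⊓ s.len then s.val γ else 0) < v
    rw [if_pos h]; exact s.val_lt γ (h.trans_le inf_le_right)
  val_zero := fun γ h => if_neg (not_lt.2 h)

theorem take_len {s : SeqLT o v} {β : Ordinal.{u}} (h : β ≤ s.len) : (take s β).len = β :=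
  inf_eq_left.mpr h

theorem take_val {s : SeqLT o v} {β γ : Ordinal.{u}} (h : γ < (take s β).len) :
    (take s β).val γ = s.val γ := if_pos h

theorem take_le (s : SeqLT o v) (β : Ordinal.{u}) : (take s β).le s :=
  ⟨inf_le_right, fun γ h => take_val h⟩

theorem take_slt {s : SeqLT o v} {β : Ordinal.{u}} (h : β < s.len) : (take s β).slt s :=
  ⟨take_le s β, by rw [take_len h.le]; exact h⟩

theorem take_eq_self {s : SeqLT o v} {β : Ordinal.{u}} (h : s.len ≤ β) : take s β = s :=
  eq_of_le_of_len_le (take_le s β) (le_inf h le_rfl)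

theorem take_of_le {s t : SeqLT o v} (h : s.le t) : s = take t s.len := by
  refine seq_ext ?_ ?_
  · rw [take_len h.1]
  · intro β hβ
    rw [take_val (by rw [take_len h.1]; exact hβ)]
    exact h.2 β hβ

theorem take_take {s : SeqLT o v} {β γ : Ordinal.{u}} (h : β ≤ γ) :
    take (take s γ) β = take s β := by
  have hlen : (take (take s γ) β).len = (take s β).len := by
    show β ⊓ (γ ⊓ s.len) = β ⊓ s.len
    rw [← inf_assoc, inf_eq_left.mpr h]
  refine seq_ext hlen ?_
  intro δ hδ
  have h1 : δ < (take s γ).len := hδ.trans_le inf_le_right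
  rw [take_val hδ, take_val h1, take_val (hlen ▸ hδ)]

theorem take_agree {s t : SeqLT o v} (h : s.le t) {β : Ordinal.{u}} (hβ : β ≤ s.len) :
    take s β = take t β := by
  refine seq_ext ?_ ?_
  · rw [take_len hβ, take_len (hβ.trans h.1)]
  · intro γ hγ
    rw [take_len hβ] at hγ
    rw [take_val (by rw [take_len hβ]; exact hγ), take_val (by rw [take_len (hβ.trans h.1)]; exact hγ)]
    exact h.2 γ (hγ.trans_le hβ)

end BMAux
namespace BMAux

open Ordinal Order

attribute [local instance] Classical.propDecidable

variable {o v : Ordinal.{u}}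

/-! #### `snoc` lemmas -/

section Snoc

variable {s : SeqLT o v} {β : Ordinal.{u}} (h1 : s.len + 1 < o ⊔ 1) (h2 : β < v)

include h1 h2

theorem snoc_len : (s.snoc β).len = s.len + 1 := by
  rw [SeqLT.snoc, dif_pos ⟨h1, h2⟩]

theorem snoc_val_last : (s.snoc β).val s.len = β := by
  rw [SeqLT.snoc, dif_pos ⟨h1, h2⟩]
  exact if_pos rfl

theorem snoc_val_of_lt {γ : Ordinal.{u}} (h : γ < s.len) : (s.snoc β).val γ = s.val γ := by
  rw [SeqLT.snoc, dif_pos ⟨h1, h2⟩]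
  exact if_neg h.ne

theorem le_snoc : s.le (s.snoc β) := by
  refine ⟨?_, fun γ hγ => (snoc_val_of_lt h1 h2 hγ).symm⟩
  rw [snoc_len h1 h2]
  exact (lt_add_one _).le

theorem slt_snoc : s.slt (s.snoc β) := by
  refine ⟨le_snoc h1 h2, ?_⟩
  rw [snoc_len h1 h2]
  exact lt_add_one _

theorem snoc_take : take (s.snoc β) s.len = s :=
  (take_of_le (le_snoc h1 h2)).symm

end Snoc

/-! #### Unions of chains -/

/-- The union of the family `s` over indices `< γ` (junk if the lengths are unbounded). -/
def unionSeq (γ : Ordinal.{u}) (s : Ordinal.{u} → SeqLT o v) : SeqLT o v :=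
  if h : Ordinal.bsup.{u, u} γ (fun α _ => (s α).len) < o ⊔ 1 then
    { len := Ordinal.bsup.{u, u} γ (fun α _ => (s α).len)
      len_lt := h
      val := fun β => if h2 : ∃ α, α < γ ∧ β < (s α).len then (s h2.choose).val β else 0
      val_lt := fun β hβ => by
        obtain ⟨α, hα, hβα⟩ := Ordinal.lt_bsup.{u, u} _ |>.mp hβ
        have h2 : ∃ α, α < γ ∧ β < (s α).len := ⟨α, hα, hβα⟩
        show (if h2 : ∃ α, α < γ ∧ β < (s α).len then (s h2.choose).val β else 0) < v
        rw [dif_pos h2]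
        exact (s h2.choose).val_lt β h2.choose_spec.2
      val_zero := fun β hβ => by
        show (if h2 : ∃ α, α < γ ∧ β < (s α).len then (s h2.choose).val β else 0) = 0
        refine dif_neg ?_
        rintro ⟨α, hα, hβα⟩
        exact absurd (hβα.trans_le (Ordinal.le_bsup.{u, u} _ α hα)) (not_lt.mpr hβ) }
  else SeqLT.empty o v

/-- A chain over indices `< γ`. -/
def IsChain' (γ : Ordinal.{u}) (s : Ordinal.{u} → SeqLT o v) : Prop :=
  ∀ α β, α < β → β < γ → (s α).slt (s β)

theorem chain_val_agree {γ : Ordinal.{u}} {s : Ordinal.{u} → SeqLT o v} (hc : IsChain' γ s)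
    {α α' β : Ordinal.{u}} (hα : α < γ) (hα' : α' < γ) (hβ : β < (s α).len)
    (hβ' : β < (s α').len) : (s α).val β = (s α').val β := by
  rcases lt_trichotomy α α' with h | rfl | h
  · exact (hc α α' h hα').1.2 β hβ
  · rfl
  · exact ((hc α' α h hα).1.2 β hβ').symm

theorem unionSeq_len {γ : Ordinal.{u}} {s : Ordinal.{u} → SeqLT o v}
    (hsup : Ordinal.bsup.{u, u} γ (fun α _ => (s α).len) < o ⊔ 1) :
    (unionSeq γ s).len = Ordinal.bsup.{u, u} γ (fun α _ => (s α).len) := by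
  rw [unionSeq, dif_pos hsup]

theorem unionSeq_val {γ : Ordinal.{u}} {s : Ordinal.{u} → SeqLT o v}
    (hsup : Ordinal.bsup.{u, u} γ (fun α _ => (s α).len) < o ⊔ 1) (β : Ordinal.{u}) :
    (unionSeq γ s).val β =
      if h2 : ∃ α, α < γ ∧ β < (s α).len then (s h2.choose).val β else 0 := by
  rw [unionSeq, dif_pos hsup]

theorem unionSeq_isUnion {γ : Ordinal.{u}} {s : Ordinal.{u} → SeqLT o v} (hc : IsChain' γ s)
    (hsup : Ordinal.bsup.{u, u} γ (fun α _ => (s α).len) < o ⊔ 1) :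
    IsUnionOfChain (unionSeq γ s) γ s := by
  constructor
  · intro α hα
    refine ⟨?_, ?_⟩
    · rw [unionSeq_len hsup]
      exact Ordinal.le_bsup.{u, u} _ α hα
    · intro β hβ
      have h2 : ∃ α', α' < γ ∧ β < (s α').len := ⟨α, hα, hβ⟩
      rw [unionSeq_val hsup, dif_pos h2]
      exact chain_val_agree hc hα h2.choose_spec.1 hβ h2.choose_spec.2
  · intro β hβ
    rw [unionSeq_len hsup] at hβ
    obtain ⟨α, hα, hβα⟩ := Ordinal.lt_bsup.{u, u} _ |>.mp hβ
    exact ⟨α, hα, hβα⟩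

theorem isUnion_le {w u : SeqLT o v} {γ : Ordinal.{u}} {s : Ordinal.{u} → SeqLT o v}
    (hu : IsUnionOfChain u γ s) (hw : ∀ α, α < γ → (s α).le w) : u.le w := by
  constructor
  · refine le_of_forall_lt fun β hβ => ?_
    obtain ⟨α, hα, hβα⟩ := hu.2 β hβ
    exact hβα.trans_le (hw α hα).1
  · intro β hβ
    obtain ⟨α, hα, hβα⟩ := hu.2 β hβ
    rw [← (hu.1 α hα).2 β hβα, ← (hw α hα).2 β hβα]

theorem isUnion_unique {u u' : SeqLT o v} {γ : Ordinal.{u}} {s : Ordinal.{u} → SeqLT o v}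
    (hu : IsUnionOfChain u γ s) (hu' : IsUnionOfChain u' γ s) : u = u' := by
  have hlen : u.len = u'.len := by
    apply le_antisymm
    · refine le_of_forall_lt fun β hβ => ?_
      obtain ⟨α, hα, hβα⟩ := hu.2 β hβ
      exact hβα.trans_le (hu'.1 α hα).1
    · refine le_of_forall_lt fun β hβ => ?_
      obtain ⟨α, hα, hβα⟩ := hu'.2 β hβ
      exact hβα.trans_le (hu.1 α hα).1
  refine seq_ext hlen fun β hβ => ?_
  obtain ⟨α, hα, hβα⟩ := hu.2 β hβ
  rw [← (hu.1 α hα).2 β hβα, ← (hu'.1 α hα).2 β hβα]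

theorem isUnionOfChain_congr {u : SeqLT o v} {γ : Ordinal.{u}} {s s' : Ordinal.{u} → SeqLT o v}
    (h : ∀ α, α < γ → s α = s' α) (hu : IsUnionOfChain u γ s) : IsUnionOfChain u γ s' := by
  constructor
  · intro α hα
    rw [← h α hα]
    exact hu.1 α hα
  · intro β hβ
    obtain ⟨α, hα, hβα⟩ := hu.2 β hβ
    exact ⟨α, hα, by rwa [← h α hα]⟩

theorem chain_congr {γ : Ordinal.{u}} {s s' : Ordinal.{u} → SeqLT o v}
    (h : ∀ α, α < γ → s α = s' α) (hc : IsChain' γ s) : IsChain' γ s' := by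
  intro α β hαβ hβ
  rw [← h α (hαβ.trans hβ), ← h β hβ]
  exact hc α β hαβ hβ

theorem unionSeq_congr {γ : Ordinal.{u}} {s s' : Ordinal.{u} → SeqLT o v} (hc : IsChain' γ s)
    (h : ∀ α, α < γ → s α = s' α) : unionSeq γ s = unionSeq γ s' := by
  have hb : Ordinal.bsup.{u, u} γ (fun α _ => (s α).len) =
      Ordinal.bsup.{u, u} γ (fun α _ => (s' α).len) := by
    congr 1
    funext α hα
    rw [h α hα]
  by_cases hsup : Ordinal.bsup.{u, u} γ (fun α _ => (s α).len) < o ⊔ 1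
  · exact isUnion_unique (unionSeq_isUnion hc hsup)
      (isUnionOfChain_congr (fun α hα => (h α hα).symm)
        (unionSeq_isUnion (chain_congr h hc) (hb ▸ hsup)))
  · rw [unionSeq, dif_neg hsup, unionSeq, dif_neg (hb ▸ hsup)]

end BMAux
namespace BMAux

open Ordinal Order

attribute [local instance] Classical.propDecidable

variable {ν : Cardinal.{u}}

/-! #### Facts about `ν.ord` -/

theorem ord_limit (hreg : ν.IsRegular) : Order.IsSuccLimit ν.ord :=
  Cardinal.isSuccLimit_ord hreg.aleph0_le

theorem ord_pos (hreg : ν.IsRegular) : 0 < ν.ord := (ord_limit hreg).pos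

theorem ord_sup_one (hreg : ν.IsRegular) : ν.ord ⊔ 1 = ν.ord :=
  sup_eq_left.mpr (Order.one_le_iff_pos.mpr (ord_pos hreg))

theorem len_lt (hreg : ν.IsRegular) (s : SeqLT ν.ord ν.ord) : s.len < ν.ord := by
  have := s.len_lt
  rwa [ord_sup_one hreg] at this

theorem succ_lt_ord (hreg : ν.IsRegular) {δ : Ordinal.{u}} (h : δ < ν.ord) :
    δ + 1 < ν.ord := by
  rw [Ordinal.add_one_eq_succ]
  exact (ord_limit hreg).succ_lt h

theorem snoc_ok (hreg : ν.IsRegular) (s : SeqLT ν.ord ν.ord) :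
    s.len + 1 < ν.ord ⊔ 1 := by
  rw [ord_sup_one hreg]
  exact succ_lt_ord hreg (len_lt hreg s)

theorem two_mul_lt_ord (hreg : ν.IsRegular) {δ : Ordinal.{u}} (h : δ < ν.ord) :
    2 * δ < ν.ord := by
  rw [Cardinal.lt_ord, Ordinal.card_mul]
  have h2 : Ordinal.card 2 = 2 := by simp
  rw [h2]
  refine Cardinal.mul_lt_of_lt hreg.aleph0_le ?_ (Cardinal.lt_ord.mp h)
  exact lt_of_lt_of_le (by exact_mod_cast Cardinal.nat_lt_aleph0 2) hreg.aleph0_le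

theorem odd_lt_ord (hreg : ν.IsRegular) {δ : Ordinal.{u}} (h : δ < ν.ord) :
    2 * δ + 1 < ν.ord :=
  succ_lt_ord hreg (two_mul_lt_ord hreg h)

theorem bsup_len_lt (hreg : ν.IsRegular) {γ : Ordinal.{u}} (hγ : γ < ν.ord)
    (s : Ordinal.{u} → SeqLT ν.ord ν.ord) :
    Ordinal.bsup.{u, u} γ (fun α _ => (s α).len) < ν.ord ⊔ 1 := by
  rw [ord_sup_one hreg]
  exact Cardinal.bsup_lt_ord_of_isRegular hreg (Cardinal.lt_ord.mp hγ)
    (fun i _ => len_lt hreg (s i))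

/-! #### `SeqFull` and `res` -/

theorem full_ext {x y : SeqFull ν.ord ν.ord}
    (h : ∀ β, β < ν.ord → x.val β = y.val β) : x = y := by
  obtain ⟨v1, lt1, z1⟩ := x
  obtain ⟨v2, lt2, z2⟩ := y
  dsimp at h
  have : v1 = v2 := by
    funext β
    rcases lt_or_ge β ν.ord with hβ | hβ
    · exact h β hβ
    · rw [z1 β hβ, z2 β hβ]
  subst this
  rfl

theorem res_len (hreg : ν.IsRegular) (x : SeqFull ν.ord ν.ord) {β : Ordinal.{u}}
    (h : β < ν.ord) : (x.res β).len = β := by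
  rw [SeqFull.res, dif_pos (by rw [ord_sup_one hreg]; exact h)]

theorem res_val (hreg : ν.IsRegular) (x : SeqFull ν.ord ν.ord) {β γ : Ordinal.{u}}
    (h : β < ν.ord) (hγ : γ < β) : (x.res β).val γ = x.val γ := by
  rw [SeqFull.res, dif_pos (by rw [ord_sup_one hreg]; exact h)]
  exact if_pos hγ

theorem prefix_of_le {r s : SeqLT ν.ord ν.ord} {x : SeqFull ν.ord ν.ord} (h : r.le s)
    (hs : s.prefixOf x) : r.prefixOf x := fun β hβ =>
  (h.2 β hβ).trans (hs β (hβ.trans_le h.1))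

theorem res_prefix (hreg : ν.IsRegular) (x : SeqFull ν.ord ν.ord) {β : Ordinal.{u}}
    (h : β < ν.ord) : (x.res β).prefixOf x := by
  intro γ hγ
  rw [res_len hreg x h] at hγ
  exact res_val hreg x h hγ

theorem res_eq_of_prefix (hreg : ν.IsRegular) {s : SeqLT ν.ord ν.ord}
    {x : SeqFull ν.ord ν.ord} (h : s.prefixOf x) : x.res s.len = s := by
  refine seq_ext (res_len hreg x (len_lt hreg s)) ?_
  intro β hβ
  rw [res_len hreg x (len_lt hreg s)] at hβ
  rw [res_val hreg x (len_lt hreg s) hβ, h β hβ]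

theorem res_le_res (hreg : ν.IsRegular) (x : SeqFull ν.ord ν.ord) {β γ : Ordinal.{u}}
    (h : β ≤ γ) (hγ : γ < ν.ord) : (x.res β).le (x.res γ) := by
  have hβ : β < ν.ord := h.trans_lt hγ
  constructor
  · rw [res_len hreg x hβ, res_len hreg x hγ]
    exact h
  · intro δ hδ
    rw [res_len hreg x hβ] at hδ
    rw [res_val hreg x hβ hδ, res_val hreg x hγ (hδ.trans_le h)]

theorem res_slt_res (hreg : ν.IsRegular) (x : SeqFull ν.ord ν.ord) {β γ : Ordinal.{u}}
    (h : β < γ) (hγ : γ < ν.ord) : (x.res β).slt (x.res γ) := by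
  refine ⟨res_le_res hreg x h.le hγ, ?_⟩
  rw [res_len hreg x (h.trans hγ), res_len hreg x hγ]
  exact h

theorem res_take (hreg : ν.IsRegular) (x : SeqFull ν.ord ν.ord) {β γ : Ordinal.{u}}
    (h : β ≤ γ) (hγ : γ < ν.ord) : x.res β = take (x.res γ) β := by
  have := take_of_le (res_le_res hreg x h hγ)
  rwa [res_len hreg x (h.trans_lt hγ)] at this

/-! #### The union of a full run -/

/-- The union of an `ν.ord`-chain with cofinal lengths, as an element of `ν^ν`. -/
def fullOfChain (hreg : ν.IsRegular) (p : Ordinal.{u} → SeqLT ν.ord ν.ord) :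
    SeqFull ν.ord ν.ord where
  val := fun β => if h2 : ∃ α, α < ν.ord ∧ β < (p α).len then (p h2.choose).val β else 0
  val_lt := fun β hβ => by
    show (if h2 : ∃ α, α < ν.ord ∧ β < (p α).len then (p h2.choose).val β else 0) < ν.ord
    split
    · next h2 => exact (p h2.choose).val_lt β h2.choose_spec.2
    · exact ord_pos hreg
  val_zero := fun β hβ => by
    show (if h2 : ∃ α, α < ν.ord ∧ β < (p α).len then (p h2.choose).val β else 0) = 0
    refine dif_neg ?_
    rintro ⟨α, hα, hβα⟩
    exact absurd (hβα.trans (len_lt hreg (p α))) (not_lt.mpr hβ)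

theorem fullOfChain_prefix (hreg : ν.IsRegular) {p : Ordinal.{u} → SeqLT ν.ord ν.ord}
    (hc : IsChain' ν.ord p) {α : Ordinal.{u}} (hα : α < ν.ord) :
    (p α).prefixOf (fullOfChain hreg p) := by
  intro β hβ
  have h2 : ∃ α', α' < ν.ord ∧ β < (p α').len := ⟨α, hα, hβ⟩
  show (p α).val β = (if h2 : ∃ α, α < ν.ord ∧ β < (p α).len then (p h2.choose).val β else 0)
  rw [dif_pos h2]
  exact chain_val_agree hc hα h2.choose_spec.1 hβ h2.choose_spec.2

theorem isOutcome_fullOfChain (hreg : ν.IsRegular) {p : Ordinal.{u} → SeqLT ν.ord ν.ord}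
    (hc : IsChain' ν.ord p) (hcof : ∀ β, β < ν.ord → ∃ α, α < ν.ord ∧ β < (p α).len) :
    IsOutcome p (fullOfChain hreg p) :=
  ⟨fun α hα => fullOfChain_prefix hreg hc hα, hcof⟩

theorem outcome_unique {p : Play ν.ord ν.ord} {x y : SeqFull ν.ord ν.ord}
    (hx : IsOutcome p x) (hy : IsOutcome p y) : x = y := by
  refine full_ext fun β hβ => ?_
  obtain ⟨α, hα, hβα⟩ := hx.2 β hβ
  rw [← hx.1 α hα β hβα, ← hy.1 α hα β hβα]

theorem chain_len_ge {γ : Ordinal.{u}} {p : Ordinal.{u} → SeqLT ν.ord ν.ord}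
    (hc : IsChain' γ p) : ∀ α, α < γ → α ≤ (p α).len := by
  intro α
  induction α using Ordinal.induction with
  | h α IH =>
    intro hα
    refine le_of_forall_lt fun β hβ => ?_
    exact lt_of_le_of_lt (IH β hβ (hβ.trans hα)) (hc β α hβ hα).2

end BMAux
namespace BMAux

open Ordinal Order

attribute [local instance] Classical.propDecidable

variable {ν : Cardinal.{u}}

theorem ordinal_succ_inj {a b : Ordinal.{u}} (h : a + 1 = b + 1) : a = b := by
  rcases lt_trichotomy a b with hl | he | hl
  · exact absurd h (by
      have : a + 1 < b + 1 := by
        rw [Ordinal.add_one_eq_succ, Ordinal.add_one_eq_succ]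
        exact Order.succ_lt_succ hl
      exact this.ne)
  · exact he
  · exact absurd h.symm (by
      have : b + 1 < a + 1 := by
        rw [Ordinal.add_one_eq_succ, Ordinal.add_one_eq_succ]
        exact Order.succ_lt_succ hl
      exact this.ne)

theorem lt_odd_iff {α δ : Ordinal.{u}} : α < 2 * δ + 1 ↔ α ≤ 2 * δ := by
  rw [Ordinal.add_one_eq_succ]
  exact Order.lt_succ_iff

theorem res_eq_take_of_prefix (hreg : ν.IsRegular) {w : SeqLT ν.ord ν.ord}
    {x : SeqFull ν.ord ν.ord} (hw : w.prefixOf x) {α : Ordinal.{u}} (hα : α ≤ w.len) :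
    x.res α = take w α := by
  have h1 : (take w α).prefixOf x := prefix_of_le (take_le w α) hw
  have h2 := res_eq_of_prefix hreg h1
  rwa [take_len hα] at h2

/-! #### The tactic of player II obtained from a dense homomorphism -/

variable (f : SeqLT ν.ord ν.ord → SeqLT ν.ord ν.ord)

/-- One step of the auxiliary chain construction. -/
def Phistep (r t : SeqLT ν.ord ν.ord) : SeqLT ν.ord ν.ord :=
  if h : ∃ β, β < ν.ord ∧ t.le (f (r.snoc β)) then (r.snoc h.choose).snoc 0
  else (r.snoc 0).snoc 0

theorem Phistep_slt (hreg : ν.IsRegular) (r t : SeqLT ν.ord ν.ord) :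
    r.slt (Phistep f r t) := by
  rw [Phistep]
  split
  · next h =>
    exact slt_trans (slt_snoc (snoc_ok hreg r) h.choose_spec.1)
      (slt_snoc (snoc_ok hreg _) (ord_pos hreg))
  · exact slt_trans (slt_snoc (snoc_ok hreg r) (ord_pos hreg))
      (slt_snoc (snoc_ok hreg _) (ord_pos hreg))

theorem Phistep_f_slt (hreg : ν.IsRegular) (hhom : IsHom f) {r t : SeqLT ν.ord ν.ord}
    (h : ∃ β, β < ν.ord ∧ t.le (f (r.snoc β))) : t.slt (f (Phistep f r t)) := by
  rw [Phistep, dif_pos h]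
  refine slt_of_le_of_slt h.choose_spec.2 ?_
  exact hhom _ _ (slt_snoc (snoc_ok hreg _) (ord_pos hreg))

/-- The auxiliary chain extracted from a play. -/
def Phi (p : Play ν.ord ν.ord) : Ordinal.{u} → SeqLT ν.ord ν.ord := fun δ =>
  Ordinal.limitRecOn δ
    (Phistep f (SeqLT.empty ν.ord ν.ord) (p 0))
    (fun ε ih => Phistep f ih (p (2 * (ε + 1))))
    (fun δ' _ ih =>
      Phistep f
        (unionSeq δ' (fun ε => if h : ε < δ' then ih ε h else SeqLT.empty ν.ord ν.ord))
        (p (2 * δ')))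

theorem Phi_zero (p : Play ν.ord ν.ord) :
    Phi f p 0 = Phistep f (SeqLT.empty ν.ord ν.ord) (p 0) := by
  simp only [Phi]
  rw [Ordinal.limitRecOn_zero]

theorem Phi_succ (p : Play ν.ord ν.ord) (ε : Ordinal.{u}) :
    Phi f p (ε + 1) = Phistep f (Phi f p ε) (p (2 * (ε + 1))) := by
  simp only [Phi]
  rw [Ordinal.add_one_eq_succ, Ordinal.limitRecOn_succ, Ordinal.add_one_eq_succ]

theorem Phi_limit (p : Play ν.ord ν.ord) {δ : Ordinal.{u}} (hδ : Order.IsSuccLimit δ) :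
    Phi f p δ = Phistep f
      (unionSeq δ (fun ε => if _h : ε < δ then Phi f p ε else SeqLT.empty ν.ord ν.ord))
      (p (2 * δ)) := by
  simp only [Phi]
  rw [Ordinal.limitRecOn_limit _ _ _ _ hδ]

theorem Phi_strictMono (hreg : ν.IsRegular) (p : Play ν.ord ν.ord) :
    ∀ δ, δ < ν.ord → ∀ ε, ε < δ → (Phi f p ε).slt (Phi f p δ) := by
  intro δ
  induction δ using Ordinal.induction with
  | h δ IH =>
    intro hδ ε hε
    rcases Ordinal.zero_or_succ_or_isSuccLimit δ with h0 | ⟨η, rfl⟩ | hlim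
    · exact absurd (h0 ▸ hε) ((not_lt_zero (a := ε)))
    · rw [← Ordinal.add_one_eq_succ] at hδ hε ⊢
      have hstep : (Phi f p η).slt (Phi f p (η + 1)) := by
        rw [Phi_succ]
        exact Phistep_slt f hreg _ _
      have hle : ε ≤ η := by
        rw [Ordinal.add_one_eq_succ] at hε
        exact Order.lt_succ_iff.mp hε
      rcases lt_or_eq_of_le hle with hlt | rfl
      · exact slt_trans (IH η (lt_add_one η) ((lt_add_one η).trans hδ) ε hlt) hstep
      · exact hstep
    · have hchain : IsChain' δ
          (fun ε => if _h : ε < δ then Phi f p ε else SeqLT.empty ν.ord ν.ord) := by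
        intro α β hαβ hβ
        show ((if _h : α < δ then Phi f p α else SeqLT.empty ν.ord ν.ord)).slt
          ((if _h : β < δ then Phi f p β else SeqLT.empty ν.ord ν.ord))
        rw [dif_pos (hαβ.trans hβ), dif_pos hβ]
        exact IH β hβ (hβ.trans hδ) α hαβ
      have hsup := bsup_len_lt hreg hδ
        (fun ε => if _h : ε < δ then Phi f p ε else SeqLT.empty ν.ord ν.ord)
      have hunion := unionSeq_isUnion hchain hsup
      have h1 : (Phi f p ε).le
          (unionSeq δ (fun ε => if _h : ε < δ then Phi f p ε else SeqLT.empty ν.ord ν.ord)) := by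
        have h2 := hunion.1 ε hε
        simpa only [dif_pos hε] using h2
      rw [Phi_limit f p hlim]
      exact slt_of_le_of_slt h1 (Phistep_slt f hreg _ _)

end BMAux
namespace BMAux

open Ordinal Order

attribute [local instance] Classical.propDecidable

variable {ν : Cardinal.{u}} (f : SeqLT ν.ord ν.ord → SeqLT ν.ord ν.ord)

/-- A fallback legal move. -/
def fallback (p : Play ν.ord ν.ord) (γ : Ordinal.{u}) : SeqLT ν.ord ν.ord :=
  (unionSeq γ p).snoc 0

theorem fallback_slt (hreg : ν.IsRegular) {p : Play ν.ord ν.ord} {γ : Ordinal.{u}}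
    (hc : IsChain' γ p) (hγ : γ < ν.ord) :
    ∀ α, α < γ → (p α).slt (fallback p γ) := by
  intro α hα
  have hsup := bsup_len_lt hreg hγ p
  have h1 := (unionSeq_isUnion hc hsup).1 α hα
  exact slt_of_le_of_slt h1 (slt_snoc (snoc_ok hreg _) (ord_pos hreg))

/-- Player II's strategy derived from a dense continuous homomorphism. -/
def sigmaOf : Strat ν.ord ν.ord := fun γ p =>
  if h : ∃ δ, γ = 2 * δ + 1 then
    if ∀ α, α < γ → (p α).slt (f (Phi f p h.choose)) then f (Phi f p h.choose)
    else fallback p γ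
  else fallback p γ

theorem sigmaOf_legal (hreg : ν.IsRegular) :
    LegalII (SeqLT.empty ν.ord ν.ord) (sigmaOf f) := by
  intro γ hγ hodd p hpos
  have hne : γ ≠ 0 := by
    obtain ⟨δ, rfl⟩ := hodd
    intro h0
    exact absurd (h0 ▸ even_ne_odd (δ := 0)) (by simp)
  refine ⟨?_, fun h0 => absurd h0 hne⟩
  intro α hα
  have hodd' : ∃ δ, γ = 2 * δ + 1 := hodd
  rw [sigmaOf, dif_pos hodd']
  split
  · next hcond => exact hcond α hα
  · exact fallback_slt hreg hpos.1 hγ α hα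

/-- `Phi` depends only on the even entries of the play up to the stage. -/
theorem Phi_congr (q q' : Play ν.ord ν.ord) :
    ∀ δ, (∀ ε, ε ≤ δ → q (2 * ε) = q' (2 * ε)) → Phi f q δ = Phi f q' δ := by
  intro δ
  induction δ using Ordinal.induction with
  | h δ IH =>
    intro hag
    rcases Ordinal.zero_or_succ_or_isSuccLimit δ with h0 | ⟨η, rfl⟩ | hlim
    · subst h0
      rw [Phi_zero, Phi_zero]
      have := hag 0 le_rfl
      rw [mul_zero] at this
      rw [this]
    · rw [← Ordinal.add_one_eq_succ] at hag ⊢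
      rw [Phi_succ, Phi_succ]
      have h1 : Phi f q η = Phi f q' η :=
        IH η (lt_add_one η) (fun ε hε => hag ε (hε.trans (lt_add_one η).le))
      rw [h1, hag (η + 1) le_rfl]
    · rw [Phi_limit f q hlim, Phi_limit f q' hlim]
      have h1 : (fun ε => if _h : ε < δ then Phi f q ε else SeqLT.empty ν.ord ν.ord)
          = (fun ε => if _h : ε < δ then Phi f q' ε else SeqLT.empty ν.ord ν.ord) := by
        funext ε
        by_cases hε : ε < δ
        · rw [dif_pos hε, dif_pos hε, IH ε hε (fun ε' hε' => hag ε' (hε'.trans hε.le))]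
        · rw [dif_neg hε, dif_neg hε]
      rw [h1, hag δ le_rfl]

theorem Phi_resPlay (p : Play ν.ord ν.ord) (δ : Ordinal.{u}) :
    Phi f (resPlay p (2 * δ + 1)) δ = Phi f p δ := by
  refine Phi_congr f _ _ δ fun ε hε => ?_
  have h : 2 * ε < 2 * δ + 1 := lt_odd_iff.mpr (two_mul_le_two_mul.mpr hε)
  rw [resPlay, if_pos h]

/-- The key invariant along a run following the strategy. -/
theorem run_invariant (hreg : ν.IsRegular) (hhom : IsHom f) (hdense : IsDenseMap f)
    (hcont : IsContinuousMap f) (hf0 : f (SeqLT.empty ν.ord ν.ord) = SeqLT.empty ν.ord ν.ord)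
    {p : Play ν.ord ν.ord} (hpos : IsPos (SeqLT.empty ν.ord ν.ord) p ν.ord)
    (hfol : FollowsII (sigmaOf f) p ν.ord) :
    ∀ δ, δ < ν.ord → p (2 * δ + 1) = f (Phi f p δ) := by
  intro δ
  induction δ using Ordinal.induction with
  | h δ IH =>
    intro hδ
    -- the previous element of the auxiliary chain, and the invariant f prev ≤ p (2δ)
    have hmain : ∀ r : SeqLT ν.ord ν.ord,
        Phi f p δ = Phistep f r (p (2 * δ)) → (f r).le (p (2 * δ)) →
          p (2 * δ + 1) = f (Phi f p δ) := by
      intro r hstep hle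
      have hex : ∃ β, β < ν.ord ∧ (p (2 * δ)).le (f (r.snoc β)) := hdense r (p (2 * δ)) hle
      have hslt : (p (2 * δ)).slt (f (Phi f p δ)) := by
        rw [hstep]
        exact Phistep_f_slt f hreg hhom hex
      have hcond : ∀ α, α < 2 * δ + 1 → (p α).slt (f (Phi f p δ)) := by
        intro α hα
        rcases lt_or_eq_of_le (lt_odd_iff.mp hα) with hlt | rfl
        · exact slt_trans (hpos.1 α (2 * δ) hlt (two_mul_lt_ord hreg hδ)) hslt
        · exact hslt
      have hodd : ∃ δ', 2 * δ + 1 = 2 * δ' + 1 := ⟨δ, rfl⟩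
      have hfδ := hfol (2 * δ + 1) (odd_lt_ord hreg hδ) ⟨δ, rfl⟩
      rw [sigmaOf, dif_pos hodd] at hfδ
      have hch : hodd.choose = δ := odd_inj hodd.choose_spec.symm
      rw [hch] at hfδ
      have hPhires : Phi f (resPlay p (2 * δ + 1)) δ = Phi f p δ := Phi_resPlay f p δ
      rw [hPhires] at hfδ
      have hcond' : ∀ α, α < 2 * δ + 1 → ((resPlay p (2 * δ + 1)) α).slt (f (Phi f p δ)) := by
        intro α hα
        rw [resPlay, if_pos hα]
        exact hcond α hα
      rw [if_pos hcond'] at hfδ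
      exact hfδ
    rcases Ordinal.zero_or_succ_or_isSuccLimit δ with h0 | ⟨η, rfl⟩ | hlim
    · subst h0
      refine hmain (SeqLT.empty ν.ord ν.ord) ?_ ?_
      · rw [mul_zero, Phi_zero]
      · rw [hf0]
        exact empty_le _
    · rw [← Ordinal.add_one_eq_succ] at hδ hmain IH ⊢
      refine hmain (Phi f p η) (Phi_succ f p η) ?_
      have hIH := IH η (lt_add_one η) ((lt_add_one η).trans hδ)
      rw [← hIH]
      have h1 : 2 * η + 1 < 2 * (η + 1) := by
        rw [two_mul_succ]
        exact add_lt_add_right one_lt_two _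
      exact (hpos.1 (2 * η + 1) (2 * (η + 1)) h1 (two_mul_lt_ord hreg hδ)).1
    · -- limit case: use continuity
      have hchain : IsChain' δ
          (fun ε => if _h : ε < δ then Phi f p ε else SeqLT.empty ν.ord ν.ord) := by
        intro α β hαβ hβ
        show ((if _h : α < δ then Phi f p α else SeqLT.empty ν.ord ν.ord)).slt
          ((if _h : β < δ then Phi f p β else SeqLT.empty ν.ord ν.ord))
        rw [dif_pos (hαβ.trans hβ), dif_pos hβ]
        exact Phi_strictMono f hreg p β (hβ.trans hδ) α hαβ
      have hsup := bsup_len_lt hreg hδ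
        (fun ε => if _h : ε < δ then Phi f p ε else SeqLT.empty ν.ord ν.ord)
      set u := unionSeq δ (fun ε => if _h : ε < δ then Phi f p ε else SeqLT.empty ν.ord ν.ord)
        with hu
      have hunion : IsUnionOfChain u δ (Phi f p) := by
        refine isUnionOfChain_congr (s := fun ε => if _h : ε < δ then Phi f p ε
          else SeqLT.empty ν.ord ν.ord) (fun α hα => by simp only [dif_pos hα]) ?_
        exact unionSeq_isUnion hchain hsup
      have hchain' : ∀ α β, α < β → β < δ → (Phi f p α).slt (Phi f p β) := fun α β h1 h2 =>
        Phi_strictMono f hreg p β (h2.trans hδ) α h1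
      have hcontu := hcont δ hlim hδ (Phi f p) hchain' u hunion
      refine hmain u (Phi_limit f p hlim) ?_
      refine isUnion_le hcontu ?_
      intro α hα
      have hIH := IH α hα (hα.trans hδ)
      show (f (Phi f p α)).le (p (2 * δ))
      rw [← hIH]
      exact (hpos.1 (2 * α + 1) (2 * δ) (odd_lt_two_mul.mpr hα) (two_mul_lt_ord hreg hδ)).1

end BMAux
namespace BMAux

open Ordinal Order

attribute [local instance] Classical.propDecidable

variable {ν : Cardinal.{u}}

theorem win_of_hom (hreg : ν.IsRegular) (A : Set (SeqFull ν.ord ν.ord))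
    (f : SeqLT ν.ord ν.ord → SeqLT ν.ord ν.ord) (hhom : IsHom f) (hdense : IsDenseMap f)
    (hcont : IsContinuousMap f)
    (hf0 : f (SeqLT.empty ν.ord ν.ord) = SeqLT.empty ν.ord ν.ord)
    (havoid : ∀ x y, FStarVal f x y → y ∉ A) :
    WinIIStrat (SeqLT.empty ν.ord ν.ord) A := by
  refine ⟨sigmaOf f, sigmaOf_legal f hreg, ?_⟩
  intro p hpos hfol
  have hc : IsChain' ν.ord p := hpos.1
  have key := run_invariant f hreg hhom hdense hcont hf0 hpos hfol
  have hcof : ∀ β, β < ν.ord → ∃ α, α < ν.ord ∧ β < (p α).len := by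
    intro β hβ
    exact ⟨β + 1, succ_lt_ord hreg hβ,
      lt_of_lt_of_le (lt_add_one β) (chain_len_ge hc (β + 1) (succ_lt_ord hreg hβ))⟩
  set x := fullOfChain hreg p with hx
  have hxout : IsOutcome p x := isOutcome_fullOfChain hreg hc hcof
  have hPc : IsChain' ν.ord (Phi f p) := fun α β h1 h2 => Phi_strictMono f hreg p β h2 α h1
  set χ := fullOfChain hreg (Phi f p) with hχ
  have hres : ∀ δ, δ < ν.ord → χ.res (Phi f p δ).len = Phi f p δ := fun δ hδ =>
    res_eq_of_prefix hreg (fullOfChain_prefix hreg hPc hδ)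
  have hstar : FStarVal f χ x := by
    constructor
    · intro α hα
      have hδ0 : α + 1 < ν.ord := succ_lt_ord hreg hα
      have hαlen : α < (Phi f p (α + 1)).len :=
        lt_of_lt_of_le (lt_add_one α) (chain_len_ge hPc (α + 1) hδ0)
      have h1 : χ.res α = take (Phi f p (α + 1)) α :=
        res_eq_take_of_prefix hreg (fullOfChain_prefix hreg hPc hδ0) hαlen.le
      rw [h1]
      have h2 : (f (take (Phi f p (α + 1)) α)).le (f (Phi f p (α + 1))) :=
        (hhom _ _ (take_slt hαlen)).1
      refine prefix_of_le h2 ?_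
      rw [← key (α + 1) hδ0]
      exact fullOfChain_prefix hreg hc (odd_lt_ord hreg hδ0)
    · intro β hβ
      have hδ0 : β + 1 < ν.ord := succ_lt_ord hreg hβ
      have hidx : β + 1 < 2 * (β + 1) + 1 :=
        lt_of_le_of_lt (le_two_mul (β + 1)) (lt_add_one _)
      have hb1 : β < (p (β + 1)).len :=
        lt_of_lt_of_le (lt_add_one β) (chain_len_ge hc (β + 1) hδ0)
      have hlen2 : (p (β + 1)).len < (p (2 * (β + 1) + 1)).len :=
        (hc (β + 1) (2 * (β + 1) + 1) hidx (odd_lt_ord hreg hδ0)).2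
      refine ⟨(Phi f p (β + 1)).len, len_lt hreg _, ?_⟩
      rw [hres (β + 1) hδ0, ← key (β + 1) hδ0]
      exact hb1.trans hlen2
  exact ⟨x, hxout, havoid χ x hstar⟩

end BMAux
namespace BMAux

open Ordinal Order Set

attribute [local instance] Classical.propDecidable

variable {ν : Cardinal.{u}}

/-! #### An enumeration of proper extensions -/

/-- Encoding of a sequence as a point of a sigma type. -/
def toSig (hreg : ν.IsRegular) (s : SeqLT ν.ord ν.ord) :
    Σ α : Set.Iio ν.ord, (Set.Iio α.1 → Set.Iio ν.ord) :=
  ⟨⟨s.len, len_lt hreg s⟩, fun γ => ⟨s.val γ.1, s.val_lt γ.1 γ.2⟩⟩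

/-- Application helper for the sigma encoding. -/
def sigApp (z : Σ α : Set.Iio (ν.ord), (Set.Iio α.1 → Set.Iio ν.ord)) (β : Ordinal.{u}) :
    Ordinal.{u} :=
  if h : β < z.1.1 then (z.2 ⟨β, h⟩).1 else 0

theorem toSig_inj (hreg : ν.IsRegular) : Function.Injective (toSig (ν := ν) hreg) := by
  intro s t h
  have h1 : s.len = t.len := congrArg (fun z => z.1.1) h
  refine seq_ext h1 fun β hβ => ?_
  have h2 : sigApp (toSig hreg s) β = sigApp (toSig hreg t) β := by rw [h]
  rw [sigApp, sigApp] at h2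
  have hs : β < ((toSig hreg s).1 : Ordinal) := hβ
  have ht0 : β < t.len := h1 ▸ hβ
  have ht : β < ((toSig hreg t).1 : Ordinal) := ht0
  rw [dif_pos hs, dif_pos ht] at h2
  exact h2

theorem mk_seqLT_le (hreg : ν.IsRegular) (hpow : Cardinal.powerlt ν ν = ν) :
    Cardinal.mk (SeqLT ν.ord ν.ord) ≤ Cardinal.mk (Set.Iio ν.ord) := by
  have h1 : Cardinal.mk (SeqLT ν.ord ν.ord) ≤
      Cardinal.mk (Σ α : Set.Iio ν.ord, (Set.Iio α.1 → Set.Iio ν.ord)) :=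
    Cardinal.mk_le_of_injective (toSig_inj hreg)
  refine h1.trans ?_
  rw [Cardinal.mk_sigma]
  have h2 : ∀ α : Set.Iio ν.ord,
      Cardinal.mk (Set.Iio α.1 → Set.Iio ν.ord) ≤ Cardinal.lift.{u + 1} ν := by
    intro α
    rw [Cardinal.mk_arrow, Ordinal.mk_Iio_ordinal, Ordinal.mk_Iio_ordinal,
      Cardinal.lift_id, Cardinal.lift_id, ← Cardinal.lift_power, Cardinal.lift_le]
    rw [Cardinal.card_ord]
    have hlt : (α.1).card < ν := Cardinal.lt_ord.mp α.2
    have := Cardinal.le_powerlt (b := ν) ν hlt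
    rwa [hpow] at this
  calc (Cardinal.sum fun α : Set.Iio ν.ord => Cardinal.mk (Set.Iio α.1 → Set.Iio ν.ord))
      ≤ Cardinal.sum fun _ : Set.Iio ν.ord => Cardinal.lift.{u + 1} ν :=
        Cardinal.sum_le_sum _ _ h2
    _ = Cardinal.mk (Set.Iio ν.ord) * Cardinal.lift.{u + 1} ν := Cardinal.sum_const' _ _
    _ = Cardinal.lift.{u + 1} ν * Cardinal.lift.{u + 1} ν := by
        rw [Ordinal.mk_Iio_ordinal, Cardinal.card_ord]
    _ = Cardinal.lift.{u + 1} ν := Cardinal.mul_eq_self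
        (Cardinal.aleph0_le_lift.mpr hreg.aleph0_le)
    _ = Cardinal.mk (Set.Iio ν.ord) := by rw [Ordinal.mk_Iio_ordinal, Cardinal.card_ord]

/-- An injection of `ν^{<ν}` into the ordinals `< ν`. -/
def emb (hreg : ν.IsRegular) (hpow : Cardinal.powerlt ν ν = ν) :
    SeqLT ν.ord ν.ord ↪ Set.Iio ν.ord :=
  Classical.choice ((Cardinal.le_def _ _).mp (mk_seqLT_le hreg hpow))

/-- Decoding. -/
def decode (hreg : ν.IsRegular) (hpow : Cardinal.powerlt ν ν = ν) (β : Ordinal.{u}) :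
    SeqLT ν.ord ν.ord :=
  if h : ∃ t, (emb hreg hpow t).1 = β then h.choose else SeqLT.empty ν.ord ν.ord

theorem decode_emb (hreg : ν.IsRegular) (hpow : Cardinal.powerlt ν ν = ν)
    (t : SeqLT ν.ord ν.ord) : decode hreg hpow (emb hreg hpow t).1 = t := by
  have h : ∃ t', (emb hreg hpow t').1 = (emb hreg hpow t).1 := ⟨t, rfl⟩
  rw [decode, dif_pos h]
  have := h.choose_spec
  exact (emb hreg hpow).injective (Subtype.ext this)

/-- The menu of moves for player I: `E r` enumerates all proper extensions of `r`. -/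
def eMenu (hreg : ν.IsRegular) (hpow : Cardinal.powerlt ν ν = ν)
    (r : SeqLT ν.ord ν.ord) (β : Ordinal.{u}) : SeqLT ν.ord ν.ord :=
  if r.slt (decode hreg hpow β) then decode hreg hpow β else r.snoc 0

theorem eMenu_slt (hreg : ν.IsRegular) (hpow : Cardinal.powerlt ν ν = ν)
    (r : SeqLT ν.ord ν.ord) (β : Ordinal.{u}) : r.slt (eMenu hreg hpow r β) := by
  rw [eMenu]
  split
  · next h => exact h
  · exact slt_snoc (snoc_ok hreg r) (ord_pos hreg)

theorem eMenu_surj (hreg : ν.IsRegular) (hpow : Cardinal.powerlt ν ν = ν)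
    {r t : SeqLT ν.ord ν.ord} (h : r.slt t) :
    ∃ β, β < ν.ord ∧ eMenu hreg hpow r β = t := by
  refine ⟨(emb hreg hpow t).1, (emb hreg hpow t).2, ?_⟩
  have hd : decode hreg hpow (emb hreg hpow t).1 = t := decode_emb hreg hpow t
  rw [eMenu, hd, if_pos h]

end BMAux
namespace BMAux

open Ordinal Order

attribute [local instance] Classical.propDecidable

variable {ν : Cardinal.{u}}

variable (hreg : ν.IsRegular) (hpow : Cardinal.powerlt ν ν = ν)

/-- The canonical run of the game along a node `s`, relative to a value assignment `g`. -/
def RunTo (g : SeqLT ν.ord ν.ord → SeqLT ν.ord ν.ord) (s : SeqLT ν.ord ν.ord) :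
    Play ν.ord ν.ord := fun α =>
  if he : ∃ ζ, α = 2 * ζ ∧ ζ < s.len then
    eMenu hreg hpow (g (take s he.choose)) (s.val he.choose)
  else if ho : ∃ ζ, α = 2 * ζ + 1 ∧ ζ + 1 < s.len then g (take s (ho.choose + 1))
  else SeqLT.empty ν.ord ν.ord

theorem runTo_even (g : SeqLT ν.ord ν.ord → SeqLT ν.ord ν.ord) {s : SeqLT ν.ord ν.ord}
    {ζ : Ordinal.{u}} (hζ : ζ < s.len) :
    RunTo hreg hpow g s (2 * ζ) = eMenu hreg hpow (g (take s ζ)) (s.val ζ) := by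
  have he : ∃ ζ', 2 * ζ = 2 * ζ' ∧ ζ' < s.len := ⟨ζ, rfl, hζ⟩
  rw [RunTo, dif_pos he]
  have : he.choose = ζ := (two_mul_inj he.choose_spec.1).symm
  rw [this]

theorem runTo_odd (g : SeqLT ν.ord ν.ord → SeqLT ν.ord ν.ord) {s : SeqLT ν.ord ν.ord}
    {ζ : Ordinal.{u}} (hζ : ζ + 1 < s.len) :
    RunTo hreg hpow g s (2 * ζ + 1) = g (take s (ζ + 1)) := by
  have hne : ¬ ∃ ζ', 2 * ζ + 1 = 2 * ζ' ∧ ζ' < s.len := by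
    rintro ⟨ζ', hζ', -⟩
    exact even_ne_odd hζ'.symm
  have ho : ∃ ζ', 2 * ζ + 1 = 2 * ζ' + 1 ∧ ζ' + 1 < s.len := ⟨ζ, rfl, hζ⟩
  rw [RunTo, dif_neg hne, dif_pos ho]
  have : ho.choose = ζ := (odd_inj ho.choose_spec.1).symm
  rw [this]

theorem runTo_undef (g : SeqLT ν.ord ν.ord → SeqLT ν.ord ν.ord) {s : SeqLT ν.ord ν.ord}
    {α : Ordinal.{u}} (h1 : ∀ ζ, ζ < s.len → α ≠ 2 * ζ)
    (h2 : ∀ ζ, ζ + 1 < s.len → α ≠ 2 * ζ + 1) :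
    RunTo hreg hpow g s α = SeqLT.empty ν.ord ν.ord := by
  have he : ¬ ∃ ζ, α = 2 * ζ ∧ ζ < s.len := by
    rintro ⟨ζ, rfl, hζ⟩
    exact h1 ζ hζ rfl
  have ho : ¬ ∃ ζ, α = 2 * ζ + 1 ∧ ζ + 1 < s.len := by
    rintro ⟨ζ, rfl, hζ⟩
    exact h2 ζ hζ rfl
  rw [RunTo, dif_neg he, dif_neg ho]

theorem runTo_congr {g g' : SeqLT ν.ord ν.ord → SeqLT ν.ord ν.ord} {s : SeqLT ν.ord ν.ord}
    (h : ∀ δ, δ < s.len → g (take s δ) = g' (take s δ)) :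
    RunTo hreg hpow g s = RunTo hreg hpow g' s := by
  funext α
  rw [RunTo, RunTo]
  split
  · next he => rw [h he.choose he.choose_spec.2]
  · split
    · next ho =>
      have hlt : ho.choose + 1 < s.len := ho.choose_spec.2
      rw [h (ho.choose + 1) hlt]
    · rfl

/-- The homomorphism defined from a strategy `σ` of player II by recursion on the length. -/
def fdef (σ : Strat ν.ord ν.ord) : SeqLT ν.ord ν.ord → SeqLT ν.ord ν.ord :=
  WellFounded.fix (InvImage.wf SeqLT.len Ordinal.lt_wf)
    (fun s IH =>
      if h1 : ∃ ε, s.len = ε + 1 then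
        σ (2 * h1.choose + 1)
          (RunTo hreg hpow
            (fun r => if h : r.len < s.len then IH r h else SeqLT.empty ν.ord ν.ord) s)
      else
        unionSeq s.len
          (fun ε => if h : ε < s.len then
            IH (take s ε) (by
              show (take s ε).len < s.len
              rw [take_len h.le]
              exact h)
            else SeqLT.empty ν.ord ν.ord))

theorem fdef_eq (σ : Strat ν.ord ν.ord) (s : SeqLT ν.ord ν.ord) :
    fdef hreg hpow σ s =
      if h1 : ∃ ε, s.len = ε + 1 then
        σ (2 * h1.choose + 1)
          (RunTo hreg hpow
            (fun r => if _h : r.len < s.len then fdef hreg hpow σ r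
              else SeqLT.empty ν.ord ν.ord) s)
      else
        unionSeq s.len
          (fun ε => if _h : ε < s.len then fdef hreg hpow σ (take s ε)
            else SeqLT.empty ν.ord ν.ord) := by
  rw [fdef, WellFounded.fix_eq]

theorem fdef_succ (σ : Strat ν.ord ν.ord) {s : SeqLT ν.ord ν.ord} {ε : Ordinal.{u}}
    (h : s.len = ε + 1) :
    fdef hreg hpow σ s = σ (2 * ε + 1) (RunTo hreg hpow (fdef hreg hpow σ) s) := by
  rw [fdef_eq]
  have h1 : ∃ ε', s.len = ε' + 1 := ⟨ε, h⟩
  rw [dif_pos h1]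
  have hch : h1.choose = ε := ordinal_succ_inj (h1.choose_spec.symm.trans h)
  rw [hch]
  congr 1
  refine runTo_congr hreg hpow fun δ hδ => ?_
  have : (take s δ).len < s.len := by rw [take_len hδ.le]; exact hδ
  rw [dif_pos this]

theorem fdef_nosucc (σ : Strat ν.ord ν.ord) {s : SeqLT ν.ord ν.ord}
    (h : ¬ ∃ ε, s.len = ε + 1) :
    fdef hreg hpow σ s = unionSeq s.len
      (fun ε => if _h : ε < s.len then fdef hreg hpow σ (take s ε)
        else SeqLT.empty ν.ord ν.ord) := by
  rw [fdef_eq, dif_neg h]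

theorem fdef_empty (σ : Strat ν.ord ν.ord) {s : SeqLT ν.ord ν.ord} (h : s.len = 0) :
    fdef hreg hpow σ s = SeqLT.empty ν.ord ν.ord := by
  have hns : ¬ ∃ ε, s.len = ε + 1 := by
    rintro ⟨ε, hε⟩
    rw [h] at hε
    exact (Ordinal.succ_ne_zero ε) (by rw [← Ordinal.add_one_eq_succ]; exact hε.symm)
  rw [fdef_nosucc hreg hpow σ hns]
  refine eq_empty_of_len_eq_zero ?_
  have hsup : Ordinal.bsup.{u, u} s.len (fun α _ =>
      ((fun ε => if _h : ε < s.len then fdef hreg hpow σ (take s ε)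
        else SeqLT.empty ν.ord ν.ord) α).len) < ν.ord ⊔ 1 :=
    bsup_len_lt hreg (h ▸ ord_pos hreg) _
  rw [unionSeq_len hsup]
  rw [h]
  exact le_antisymm (Ordinal.bsup_le fun i hi => absurd hi ((not_lt_zero (a := i))))
    zero_le

/-- The length of the position reached in the run along `s` before player I's move at
stage `s.len`. -/
def plen (s : SeqLT ν.ord ν.ord) : Ordinal.{u} :=
  if h : ∃ ε, s.len = ε + 1 then 2 * h.choose + 1 else 2 * s.len

theorem plen_succ {s : SeqLT ν.ord ν.ord} {ε : Ordinal.{u}} (h : s.len = ε + 1) :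
    plen s = 2 * ε + 1 := by
  have h1 : ∃ ε', s.len = ε' + 1 := ⟨ε, h⟩
  rw [plen, dif_pos h1, ordinal_succ_inj (h1.choose_spec.symm.trans h)]

theorem plen_nosucc {s : SeqLT ν.ord ν.ord} (h : ¬ ∃ ε, s.len = ε + 1) :
    plen s = 2 * s.len := by
  rw [plen, dif_neg h]

theorem plen_le (s : SeqLT ν.ord ν.ord) : plen s ≤ 2 * s.len := by
  by_cases h : ∃ ε, s.len = ε + 1
  · obtain ⟨ε, hε⟩ := h
    rw [plen_succ hε, hε, two_mul_succ]
    exact (add_lt_add_right one_lt_two _).le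
  · rw [plen_nosucc h]

theorem agree_even (σ : Strat ν.ord ν.ord) {s : SeqLT ν.ord ν.ord} {η ζ : Ordinal.{u}}
    (hη : η ≤ s.len) (hζ : ζ < η) :
    RunTo hreg hpow (fdef hreg hpow σ) (take s η) (2 * ζ) =
      RunTo hreg hpow (fdef hreg hpow σ) s (2 * ζ) := by
  have hηlen : (take s η).len = η := take_len hη
  have hζ' : ζ < (take s η).len := by rw [hηlen]; exact hζ
  have hζs : ζ < s.len := hζ.trans_le hη
  rw [runTo_even hreg hpow _ hζ', runTo_even hreg hpow _ hζs, take_take hζ.le,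
    take_val (show ζ < (take s η).len by rw [hηlen]; exact hζ)]

theorem agree_odd (σ : Strat ν.ord ν.ord) {s : SeqLT ν.ord ν.ord} {η ζ : Ordinal.{u}}
    (hη : η ≤ s.len) (hζ : ζ + 1 < η) :
    RunTo hreg hpow (fdef hreg hpow σ) (take s η) (2 * ζ + 1) =
      RunTo hreg hpow (fdef hreg hpow σ) s (2 * ζ + 1) := by
  have hζ' : ζ + 1 < (take s η).len := by rw [take_len hη]; exact hζ
  have hζs : ζ + 1 < s.len := hζ.trans_le hη
  rw [runTo_odd hreg hpow _ hζ', runTo_odd hreg hpow _ hζs, take_take hζ.le]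

end BMAux
namespace BMAux

open Ordinal Order

attribute [local instance] Classical.propDecidable

variable {ν : Cardinal.{u}}

theorem lt_add_one_iff' {a b : Ordinal.{u}} : a < b + 1 ↔ a ≤ b := by
  rw [Ordinal.add_one_eq_succ]
  exact Order.lt_succ_iff

theorem add_one_lt_add_one_iff {a b : Ordinal.{u}} : a + 1 < b + 1 ↔ a < b := by
  rw [Ordinal.add_one_eq_succ, Ordinal.add_one_eq_succ]
  exact Order.succ_lt_succ_iff

theorem add_two_eq (ζ : Ordinal.{u}) : ζ + 2 = ζ + 1 + 1 := by
  rw [← one_add_one_eq_two, ← add_assoc]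

theorem two_mul_succ' (ζ : Ordinal.{u}) : 2 * (ζ + 1) = 2 * ζ + 1 + 1 := by
  rw [two_mul_succ, add_two_eq]

variable (hreg : ν.IsRegular) (hpow : Cardinal.powerlt ν ν = ν) (σ : Strat ν.ord ν.ord)

/-- Agreement of the runs along a node and an initial segment of it, below the length of
the shorter position. -/
theorem agree_below_plen {s : SeqLT ν.ord ν.ord} {η : Ordinal.{u}} (hη : η ≤ s.len) :
    ∀ γ, γ < plen (take s η) →
      RunTo hreg hpow (fdef hreg hpow σ) s γ =
        RunTo hreg hpow (fdef hreg hpow σ) (take s η) γ := by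
  have hrlen : (take s η).len = η := take_len hη
  have hpl : plen (take s η) ≤ 2 * η := by
    have := plen_le (take s η)
    rwa [hrlen] at this
  intro γ hγ
  rcases even_or_odd γ with ⟨ζ, rfl⟩ | ⟨ζ, rfl⟩
  · have hζη : ζ < η := two_mul_lt_two_mul.mp (lt_of_lt_of_le hγ hpl)
    exact (agree_even hreg hpow σ hη hζη).symm
  · have hζ1η : ζ + 1 < η := by
      by_cases hηsucc : ∃ ζ0, (take s η).len = ζ0 + 1
      · obtain ⟨ζ0, hζ0⟩ := hηsucc
        rw [plen_succ hζ0] at hγ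
        have hζζ0 : ζ < ζ0 := by
          have h1 : 2 * ζ + 1 ≤ 2 * ζ0 := lt_odd_iff.mp hγ
          by_contra hc
          push_neg at hc
          have h2 : (2 : Ordinal.{u}) * ζ0 < 2 * ζ + 1 :=
            lt_of_le_of_lt (two_mul_le_two_mul.mpr hc) (lt_add_one _)
          exact absurd h1 (not_le.mpr h2)
        rw [hrlen] at hζ0
        rw [hζ0]
        exact add_one_lt_add_one_iff.mpr hζζ0
      · rw [plen_nosucc hηsucc, hrlen] at hγ
        have hζη : ζ < η := odd_lt_two_mul.mp hγ
        rcases Ordinal.zero_or_succ_or_isSuccLimit η with h0 | ⟨ζ0, hζ0⟩ | hlim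
        · exact absurd (h0 ▸ hζη) ((not_lt_zero (a := ζ)))
        · exact absurd ⟨ζ0, by rw [hrlen, ← hζ0, Ordinal.add_one_eq_succ]⟩ hηsucc
        · exact hlim.succ_lt hζη
    exact (agree_odd hreg hpow σ hη hζ1η).symm

/-- The invariant carried through the induction on the length of `s`. -/
def Inv (s : SeqLT ν.ord ν.ord) : Prop :=
  (∀ β, β < s.len → (fdef hreg hpow σ (take s β)).slt (fdef hreg hpow σ s)) ∧
  IsPos (SeqLT.empty ν.ord ν.ord) (RunTo hreg hpow (fdef hreg hpow σ) s) (plen s) ∧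
  (∀ α, α < 2 * s.len →
    (RunTo hreg hpow (fdef hreg hpow σ) s α).slt (fdef hreg hpow σ s))

theorem inv_all (hleg : LegalII (SeqLT.empty ν.ord ν.ord) σ) : ∀ s, Inv hreg hpow σ s := by
  suffices H : ∀ δ, ∀ s : SeqLT ν.ord ν.ord, s.len = δ → Inv hreg hpow σ s by
    exact fun s => H s.len s rfl
  intro δ
  induction δ using Ordinal.induction with
  | h δ IH =>
    intro s hs
    by_cases hsucc : ∃ ε, s.len = ε + 1
    · -- successor case
      obtain ⟨ε, hε⟩ := hsucc
      have hεslen : ε < s.len := by rw [hε]; exact lt_add_one ε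
      have hεδ : ε < δ := hs ▸ hεslen
      have hrlen : (take s ε).len = ε := take_len hεslen.le
      have hInvR := IH ε hεδ (take s ε) hrlen
      have hεν : ε < ν.ord := hεslen.trans (len_lt hreg s)
      have h2ε1 : 2 * ε + 1 < ν.ord := odd_lt_ord hreg hεν
      have hq2ε : RunTo hreg hpow (fdef hreg hpow σ) s (2 * ε) =
          eMenu hreg hpow (fdef hreg hpow σ (take s ε)) (s.val ε) :=
        runTo_even hreg hpow _ hεslen
      have hplenr : plen (take s ε) ≤ 2 * ε := by
        have := plen_le (take s ε)
        rwa [hrlen] at this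
      have KC := agree_below_plen hreg hpow σ hεslen.le
      have HC1 : ∀ α, α < plen (take s ε) →
          (RunTo hreg hpow (fdef hreg hpow σ) s α).slt (fdef hreg hpow σ (take s ε)) := by
        intro α hα
        rw [KC α hα]
        refine hInvR.2.2 α ?_
        rw [hrlen]
        exact lt_of_lt_of_le hα hplenr
      have HC4 : (fdef hreg hpow σ (take s ε)).slt
          (RunTo hreg hpow (fdef hreg hpow σ) s (2 * ε)) := by
        rw [hq2ε]
        exact eMenu_slt hreg hpow _ _
      have HC3 : ∀ ζ0, ε = ζ0 + 1 →
          RunTo hreg hpow (fdef hreg hpow σ) s (2 * ζ0 + 1) =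
            fdef hreg hpow σ (take s ε) := by
        intro ζ0 hζ0
        have hζ01 : ζ0 + 1 < s.len := by rw [hε, hζ0]; exact lt_add_one _
        rw [runTo_odd hreg hpow _ hζ01, ← hζ0]
      -- analysis of indices in [plen (take s ε), 2ε)
      have HSPLIT : ∀ α, α < 2 * ε → plen (take s ε) ≤ α →
          ∃ ζ0, ε = ζ0 + 1 ∧ α = 2 * ζ0 + 1 := by
        intro α hα h1
        rcases Ordinal.zero_or_succ_or_isSuccLimit ε with h0 | ⟨ζ0, hζ0⟩ | hlim
        · rw [h0, mul_zero] at hα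
          exact absurd hα ((not_lt_zero (a := α)))
        · rw [← Ordinal.add_one_eq_succ, eq_comm] at hζ0
          refine ⟨ζ0, hζ0, ?_⟩
          have hplr : plen (take s ε) = 2 * ζ0 + 1 := plen_succ (by rw [hrlen, hζ0])
          rw [hplr] at h1
          refine le_antisymm ?_ h1
          rw [hζ0, two_mul_succ'] at hα
          exact lt_add_one_iff'.mp hα
        · have hεnosucc : ¬ ∃ ζ0, (take s ε).len = ζ0 + 1 := by
            rintro ⟨ζ0, hζ0⟩
            rw [hrlen] at hζ0
            rw [hζ0, Ordinal.add_one_eq_succ] at hlim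
            exact Order.not_isSuccLimit_succ _ hlim
          rw [plen_nosucc hεnosucc, hrlen] at h1
          exact absurd hα (not_lt.mpr h1)
      have HC5 : ∀ α, α < 2 * ε →
          (RunTo hreg hpow (fdef hreg hpow σ) s α).slt
            (RunTo hreg hpow (fdef hreg hpow σ) s (2 * ε)) := by
        intro α hα
        rcases lt_or_ge α (plen (take s ε)) with h1 | h1
        · exact slt_trans (HC1 α h1) HC4
        · obtain ⟨ζ0, hζ0, rfl⟩ := HSPLIT α hα h1
          rw [HC3 ζ0 hζ0]
          exact HC4
      have B_s : IsPos (SeqLT.empty ν.ord ν.ord) (RunTo hreg hpow (fdef hreg hpow σ) s)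
          (2 * ε + 1) := by
        refine ⟨?_, fun _ => empty_le _, ?_⟩
        · intro α β hαβ hβ
          rcases lt_or_eq_of_le (lt_odd_iff.mp hβ) with hβ2 | rfl
          · rcases lt_or_ge β (plen (take s ε)) with h1 | h1
            · rw [KC α (hαβ.trans h1), KC β h1]
              exact hInvR.2.1.1 α β hαβ h1
            · obtain ⟨ζ0, hζ0, rfl⟩ := HSPLIT β hβ2 h1
              rw [HC3 ζ0 hζ0]
              refine HC1 α ?_
              rw [plen_succ (by rw [hrlen, hζ0])]
              exact hαβ
          · exact HC5 α hαβ
        · intro α hα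
          refine runTo_undef hreg hpow _ ?_ ?_
          · intro ζ hζ hc
            rw [hε] at hζ
            have : (2 : Ordinal.{u}) * ζ ≤ 2 * ε :=
              two_mul_le_two_mul.mpr (lt_add_one_iff'.mp hζ)
            exact absurd (hc ▸ hα) (not_le.mpr (lt_of_le_of_lt this (lt_add_one _)))
          · intro ζ hζ hc
            rw [hε] at hζ
            have hζε : ζ < ε := add_one_lt_add_one_iff.mp hζ
            exact absurd (hc ▸ hα) (not_le.mpr (odd_lt_odd hζε))
      have hMove := hleg (2 * ε + 1) h2ε1 ⟨ε, rfl⟩ _ B_s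
      have hFs : fdef hreg hpow σ s =
          σ (2 * ε + 1) (RunTo hreg hpow (fdef hreg hpow σ) s) := fdef_succ hreg hpow σ hε
      have C1 : ∀ α, α < 2 * ε + 1 →
          (RunTo hreg hpow (fdef hreg hpow σ) s α).slt (fdef hreg hpow σ s) := by
        intro α hα
        rw [hFs]
        exact hMove.1 α hα
      have A_s : ∀ β, β < s.len → (fdef hreg hpow σ (take s β)).slt (fdef hreg hpow σ s) := by
        have hAε : (fdef hreg hpow σ (take s ε)).slt (fdef hreg hpow σ s) :=
          slt_trans HC4 (C1 (2 * ε) (lt_add_one _))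
        intro β hβ
        rw [hε] at hβ
        rcases lt_or_eq_of_le (lt_add_one_iff'.mp hβ) with hβε | rfl
        · have htt : take (take s ε) β = take s β := take_take hβε.le
          rw [← htt]
          refine slt_trans ?_ hAε
          refine hInvR.1 β ?_
          rw [hrlen]
          exact hβε
        · exact hAε
      refine ⟨A_s, ?_, ?_⟩
      · rw [plen_succ hε]
        exact B_s
      · intro α hα
        rw [hε, two_mul_succ'] at hα
        rcases lt_or_eq_of_le (lt_add_one_iff'.mp hα) with h1 | rfl
        · exact C1 α h1
        · have hempty : RunTo hreg hpow (fdef hreg hpow σ) s (2 * ε + 1) =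
              SeqLT.empty ν.ord ν.ord := by
            refine runTo_undef hreg hpow _ ?_ ?_
            · intro ζ _ hc
              exact even_ne_odd hc.symm
            · intro ζ hζ hc
              rw [hε] at hζ
              rw [odd_inj hc] at hζ
              exact absurd hζ (lt_irrefl _)
          rw [hempty]
          exact slt_of_le_of_slt (empty_le _) (C1 (2 * ε) (lt_add_one _))
    · -- non-successor case
      rcases Ordinal.zero_or_succ_or_isSuccLimit s.len with h0 | ⟨ε, hε⟩ | hlim
      · refine ⟨?_, ⟨?_, fun _ => empty_le _, ?_⟩, ?_⟩
        · intro β hβ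
          exact absurd (h0 ▸ hβ) ((not_lt_zero (a := β)))
        · intro α β hαβ hβ
          have hle := plen_le s
          rw [h0, mul_zero] at hle
          exact absurd (hβ.trans_le hle) ((not_lt_zero (a := β)))
        · intro α hα
          refine runTo_undef hreg hpow _ ?_ ?_
          · intro ζ hζ _
            exact absurd (h0 ▸ hζ) ((not_lt_zero (a := ζ)))
          · intro ζ hζ _
            exact absurd (h0 ▸ hζ) ((not_lt_zero (a := (ζ + 1))))
        · intro α hα
          rw [h0, mul_zero] at hα
          exact absurd hα ((not_lt_zero (a := α)))
      · exact absurd ⟨ε, by rw [← hε, Ordinal.add_one_eq_succ]⟩ hsucc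
      · -- limit case
        have hlenν : s.len < ν.ord := len_lt hreg s
        have hFs := fdef_nosucc hreg hpow σ hsucc
        have hlim2 : ∀ β, β < s.len → β + 1 < s.len := by
          intro β hβ
          rw [Ordinal.add_one_eq_succ]
          exact hlim.succ_lt hβ
        have chainF : IsChain' s.len (fun ε => if _h : ε < s.len then
            fdef hreg hpow σ (take s ε) else SeqLT.empty ν.ord ν.ord) := by
          intro α β hαβ hβ
          show ((if _h : α < s.len then fdef hreg hpow σ (take s α)
            else SeqLT.empty ν.ord ν.ord)).slt
            ((if _h : β < s.len then fdef hreg hpow σ (take s β)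
              else SeqLT.empty ν.ord ν.ord))
          rw [dif_pos (hαβ.trans hβ), dif_pos hβ]
          have hw := IH β (hs ▸ hβ) (take s β) (take_len hβ.le)
          have h1 := hw.1 α (by rw [take_len hβ.le]; exact hαβ)
          rwa [take_take hαβ.le] at h1
        have hsup := bsup_len_lt hreg hlenν (fun ε => if _h : ε < s.len then
          fdef hreg hpow σ (take s ε) else SeqLT.empty ν.ord ν.ord)
        have hunion : IsUnionOfChain (fdef hreg hpow σ s) s.len
            (fun ε => fdef hreg hpow σ (take s ε)) := by
          rw [hFs]
          exact isUnionOfChain_congr (fun α hα => by simp only [dif_pos hα])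
            (unionSeq_isUnion chainF hsup)
        have A_s : ∀ β, β < s.len →
            (fdef hreg hpow σ (take s β)).slt (fdef hreg hpow σ s) := by
          intro β hβ
          have hβ1 : β + 1 < s.len := hlim2 β hβ
          have hw := IH (β + 1) (hs ▸ hβ1) (take s (β + 1)) (take_len hβ1.le)
          have h1 := hw.1 β (by rw [take_len hβ1.le]; exact lt_add_one β)
          rw [take_take (lt_add_one β).le] at h1
          exact slt_of_slt_of_le h1 (hunion.1 (β + 1) hβ1)
        refine ⟨A_s, ⟨?_, fun _ => empty_le _, ?_⟩, ?_⟩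
        · rw [plen_nosucc hsucc]
          intro α β hαβ hβ
          obtain ⟨ζβ, hζβlt, hβlt⟩ : ∃ ζβ, ζβ < s.len ∧ β < 2 * ζβ + 1 + 1 := by
            rcases even_or_odd β with ⟨ζ, rfl⟩ | ⟨ζ, rfl⟩
            · exact ⟨ζ, two_mul_lt_two_mul.mp hβ, (lt_add_one _).trans (lt_add_one _)⟩
            · refine ⟨ζ, ?_, lt_add_one _⟩
              have h1 : (2:Ordinal.{u}) * ζ < 2 * s.len := (lt_add_one _).trans hβ
              exact two_mul_lt_two_mul.mp h1
          have hη : ζβ + 2 < s.len := by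
            rw [add_two_eq]
            exact hlim2 _ (hlim2 _ hζβlt)
          have hwInv := IH (ζβ + 2) (hs ▸ hη) (take s (ζβ + 2)) (take_len hη.le)
          have hplw : plen (take s (ζβ + 2)) = 2 * (ζβ + 1) + 1 :=
            plen_succ (by rw [take_len hη.le, add_two_eq])
          have hβpl : β < plen (take s (ζβ + 2)) := by
            rw [hplw, two_mul_succ']
            exact hβlt.trans (lt_add_one _)
          have hagr := agree_below_plen hreg hpow σ hη.le
          rw [hagr α (hαβ.trans hβpl), hagr β hβpl]
          exact hwInv.2.1.1 α β hαβ hβpl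
        · rw [plen_nosucc hsucc]
          intro α hα
          refine runTo_undef hreg hpow _ ?_ ?_
          · intro ζ hζ hc
            have h1 : (2:Ordinal.{u}) * ζ < 2 * s.len := two_mul_lt_two_mul.mpr hζ
            exact absurd (hc ▸ hα) (not_le.mpr h1)
          · intro ζ hζ hc
            have hζs : ζ < s.len := (lt_add_one ζ).trans hζ
            exact absurd (hc ▸ hα) (not_le.mpr (odd_lt_two_mul.mpr hζs))
        · intro α hα
          rcases even_or_odd α with ⟨ζ, rfl⟩ | ⟨ζ, rfl⟩
          · have hζ : ζ < s.len := two_mul_lt_two_mul.mp hα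
            have hζ1 : ζ + 1 < s.len := hlim2 ζ hζ
            have hwInv := IH (ζ + 1) (hs ▸ hζ1) (take s (ζ + 1)) (take_len hζ1.le)
            have hagr := agree_even hreg hpow σ hζ1.le (lt_add_one ζ)
            rw [← hagr]
            refine slt_of_slt_of_le (hwInv.2.2 (2 * ζ) ?_) (hunion.1 (ζ + 1) hζ1)
            rw [take_len hζ1.le, two_mul_succ']
            exact (lt_add_one _).trans (lt_add_one _)
          · have hζ : ζ < s.len := by
              have h1 : (2:Ordinal.{u}) * ζ < 2 * s.len := (lt_add_one _).trans hα
              exact two_mul_lt_two_mul.mp h1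
            have hζ1 : ζ + 1 < s.len := hlim2 ζ hζ
            rw [runTo_odd hreg hpow _ hζ1]
            exact A_s (ζ + 1) hζ1

end BMAux
namespace BMAux

open Ordinal Order

attribute [local instance] Classical.propDecidable

variable {ν : Cardinal.{u}}
variable (hreg : ν.IsRegular) (hpow : Cardinal.powerlt ν ν = ν) (σ : Strat ν.ord ν.ord)
variable (hleg : LegalII (SeqLT.empty ν.ord ν.ord) σ)

include hleg

theorem fdef_hom : IsHom (fdef hreg hpow σ) := by
  intro s t hst
  have h1 : s = take t s.len := take_of_le hst.1
  rw [h1]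
  exact (inv_all hreg hpow σ hleg t).1 s.len hst.2

theorem fdef_emptyval : fdef hreg hpow σ (SeqLT.empty ν.ord ν.ord) = SeqLT.empty ν.ord ν.ord :=
  fdef_empty hreg hpow σ rfl

theorem fdef_dense : IsDenseMap (fdef hreg hpow σ) := by
  intro s t hst
  rcases (le_iff_slt_or_eq.mp hst) with hslt | heq
  · obtain ⟨β, hβν, hEq⟩ := eMenu_surj hreg hpow hslt
    refine ⟨β, hβν, ?_⟩
    have hs'len : (s.snoc β).len = s.len + 1 := snoc_len (snoc_ok hreg s) hβν
    have hC := (inv_all hreg hpow σ hleg (s.snoc β)).2.2 (2 * s.len)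
      (by rw [hs'len, two_mul_succ']; exact (lt_add_one _).trans (lt_add_one _))
    have hslen' : s.len < (s.snoc β).len := by rw [hs'len]; exact lt_add_one _
    rw [runTo_even hreg hpow _ hslen', snoc_take (snoc_ok hreg s) hβν,
      snoc_val_last (snoc_ok hreg s) hβν, hEq] at hC
    exact hC.1
  · refine ⟨0, ord_pos hreg, ?_⟩
    have hslt : s.slt (s.snoc 0) := slt_snoc (snoc_ok hreg s) (ord_pos hreg)
    rw [← heq]
    exact (fdef_hom hreg hpow σ hleg s (s.snoc 0) hslt).1

theorem fdef_cont : IsContinuousMap (fdef hreg hpow σ) := by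
  intro γ hγlim hγν s hchain u hu
  have hlens : ∀ α, α < γ → (s α).len < u.len := by
    intro α hα
    have hα1 : α + 1 < γ := by rw [Ordinal.add_one_eq_succ]; exact hγlim.succ_lt hα
    exact lt_of_lt_of_le (hchain α (α + 1) (lt_add_one α) hα1).2 (hu.1 (α + 1) hα1).1
  have hslt : ∀ α, α < γ → (s α).slt u := fun α hα => ⟨hu.1 α hα, hlens α hα⟩
  have hnos : ¬ ∃ ε, u.len = ε + 1 := by
    rintro ⟨ε, hε⟩
    have hεu : ε < u.len := by rw [hε]; exact lt_add_one ε
    obtain ⟨α, hα, hεα⟩ := hu.2 ε hεu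
    have h1 : (s α).len < ε + 1 := hε ▸ hlens α hα
    exact absurd hεα (not_lt.mpr (lt_add_one_iff'.mp h1))
  constructor
  · intro α hα
    exact (fdef_hom hreg hpow σ hleg (s α) u (hslt α hα)).1
  · intro β hβ
    have hFu := fdef_nosucc hreg hpow σ hnos
    have chainW : IsChain' u.len (fun ε => if _h : ε < u.len then
        fdef hreg hpow σ (take u ε) else SeqLT.empty ν.ord ν.ord) := by
      intro α' β' hαβ hβ'
      show ((if _h : α' < u.len then fdef hreg hpow σ (take u α')
        else SeqLT.empty ν.ord ν.ord)).slt
        ((if _h : β' < u.len then fdef hreg hpow σ (take u β')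
          else SeqLT.empty ν.ord ν.ord))
      rw [dif_pos (hαβ.trans hβ'), dif_pos hβ']
      have h1 := (inv_all hreg hpow σ hleg (take u β')).1 α'
        (by rw [take_len hβ'.le]; exact hαβ)
      rwa [take_take hαβ.le] at h1
    have hsupu := bsup_len_lt hreg (len_lt hreg u) (fun ε => if _h : ε < u.len then
      fdef hreg hpow σ (take u ε) else SeqLT.empty ν.ord ν.ord)
    have hu2 := unionSeq_isUnion chainW hsupu
    rw [hFu] at hβ
    obtain ⟨ε, hε, hβε⟩ := hu2.2 β hβ
    obtain ⟨α, hα, hεα⟩ := hu.2 ε hε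
    refine ⟨α, hα, ?_⟩
    have htwe : take (s α) ε = take u ε := take_agree (hu.1 α hα) hεα.le
    have h2 : (fdef hreg hpow σ (take u ε)).slt (fdef hreg hpow σ (s α)) := by
      rw [← htwe]
      exact (inv_all hreg hpow σ hleg (s α)).1 ε hεα
    refine lt_of_lt_of_le ?_ h2.1.1
    simpa only [dif_pos hε] using hβε

end BMAux
namespace BMAux

open Ordinal Order

attribute [local instance] Classical.propDecidable

variable {ν : Cardinal.{u}}
variable (hreg : ν.IsRegular) (hpow : Cardinal.powerlt ν ν = ν) (σ : Strat ν.ord ν.ord)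

/-- The run of the game along a branch `x : ν^ν`. -/
def RunFull (x : SeqFull ν.ord ν.ord) : Play ν.ord ν.ord := fun α =>
  if he : ∃ ζ, α = 2 * ζ ∧ ζ < ν.ord then
    eMenu hreg hpow (fdef hreg hpow σ (x.res he.choose)) (x.val he.choose)
  else if ho : ∃ ζ, α = 2 * ζ + 1 ∧ ζ + 1 < ν.ord then
    fdef hreg hpow σ (x.res (ho.choose + 1))
  else SeqLT.empty ν.ord ν.ord

theorem runFull_even {x : SeqFull ν.ord ν.ord} {ζ : Ordinal.{u}} (hζ : ζ < ν.ord) :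
    RunFull hreg hpow σ x (2 * ζ) =
      eMenu hreg hpow (fdef hreg hpow σ (x.res ζ)) (x.val ζ) := by
  have he : ∃ ζ', 2 * ζ = 2 * ζ' ∧ ζ' < ν.ord := ⟨ζ, rfl, hζ⟩
  rw [RunFull, dif_pos he]
  have h1 : he.choose = ζ := (two_mul_inj he.choose_spec.1).symm
  rw [h1]

theorem runFull_odd {x : SeqFull ν.ord ν.ord} {ζ : Ordinal.{u}} (hζ : ζ + 1 < ν.ord) :
    RunFull hreg hpow σ x (2 * ζ + 1) = fdef hreg hpow σ (x.res (ζ + 1)) := by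
  have hne : ¬ ∃ ζ', 2 * ζ + 1 = 2 * ζ' ∧ ζ' < ν.ord := by
    rintro ⟨ζ', hζ', -⟩
    exact even_ne_odd hζ'.symm
  have ho : ∃ ζ', 2 * ζ + 1 = 2 * ζ' + 1 ∧ ζ' + 1 < ν.ord := ⟨ζ, rfl, hζ⟩
  rw [RunFull, dif_neg hne, dif_pos ho]
  have h1 : ho.choose = ζ := (odd_inj ho.choose_spec.1).symm
  rw [h1]

theorem runFull_undef {x : SeqFull ν.ord ν.ord} {α : Ordinal.{u}}
    (h1 : ∀ ζ, ζ < ν.ord → α ≠ 2 * ζ) (h2 : ∀ ζ, ζ + 1 < ν.ord → α ≠ 2 * ζ + 1) :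
    RunFull hreg hpow σ x α = SeqLT.empty ν.ord ν.ord := by
  have he : ¬ ∃ ζ, α = 2 * ζ ∧ ζ < ν.ord := by
    rintro ⟨ζ, rfl, hζ⟩
    exact h1 ζ hζ rfl
  have ho : ¬ ∃ ζ, α = 2 * ζ + 1 ∧ ζ + 1 < ν.ord := by
    rintro ⟨ζ, rfl, hζ⟩
    exact h2 ζ hζ rfl
  rw [RunFull, dif_neg he, dif_neg ho]

theorem agreeFull_even {x : SeqFull ν.ord ν.ord} {η ζ : Ordinal.{u}} (hη : η < ν.ord)
    (hζ : ζ < η) :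
    RunFull hreg hpow σ x (2 * ζ) =
      RunTo hreg hpow (fdef hreg hpow σ) (x.res η) (2 * ζ) := by
  have hζ' : ζ < (x.res η).len := by rw [res_len hreg x hη]; exact hζ
  rw [runFull_even hreg hpow σ (hζ.trans hη),
    runTo_even hreg hpow _ hζ', ← res_take hreg x hζ.le hη,
    res_val hreg x hη hζ]

theorem agreeFull_odd {x : SeqFull ν.ord ν.ord} {η ζ : Ordinal.{u}} (hη : η < ν.ord)
    (hζ : ζ + 1 < η) :
    RunFull hreg hpow σ x (2 * ζ + 1) =
      RunTo hreg hpow (fdef hreg hpow σ) (x.res η) (2 * ζ + 1) := by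
  have hζ' : ζ + 1 < (x.res η).len := by rw [res_len hreg x hη]; exact hζ
  rw [runFull_odd hreg hpow σ (hζ.trans hη),
    runTo_odd hreg hpow _ hζ', ← res_take hreg x hζ.le hη]

theorem agreeFull_below_plen {x : SeqFull ν.ord ν.ord} {η : Ordinal.{u}} (hη : η < ν.ord) :
    ∀ γ, γ < plen (x.res η) →
      RunFull hreg hpow σ x γ = RunTo hreg hpow (fdef hreg hpow σ) (x.res η) γ := by
  have hrlen : (x.res η).len = η := res_len hreg x hη
  have hpl : plen (x.res η) ≤ 2 * η := by
    have := plen_le (x.res η)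
    rwa [hrlen] at this
  intro γ hγ
  rcases even_or_odd γ with ⟨ζ, rfl⟩ | ⟨ζ, rfl⟩
  · have hζη : ζ < η := two_mul_lt_two_mul.mp (lt_of_lt_of_le hγ hpl)
    exact agreeFull_even hreg hpow σ hη hζη
  · have hζ1η : ζ + 1 < η := by
      by_cases hηsucc : ∃ ζ0, (x.res η).len = ζ0 + 1
      · obtain ⟨ζ0, hζ0⟩ := hηsucc
        rw [plen_succ hζ0] at hγ
        have hζζ0 : ζ < ζ0 := by
          have h1 : 2 * ζ + 1 ≤ 2 * ζ0 := lt_odd_iff.mp hγ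
          by_contra hc
          push_neg at hc
          have h2 : (2 : Ordinal.{u}) * ζ0 < 2 * ζ + 1 :=
            lt_of_le_of_lt (two_mul_le_two_mul.mpr hc) (lt_add_one _)
          exact absurd h1 (not_le.mpr h2)
        rw [hrlen] at hζ0
        rw [hζ0]
        exact add_one_lt_add_one_iff.mpr hζζ0
      · rw [plen_nosucc hηsucc, hrlen] at hγ
        have hζη : ζ < η := odd_lt_two_mul.mp hγ
        rcases Ordinal.zero_or_succ_or_isSuccLimit η with h0 | ⟨ζ0, hζ0⟩ | hlim
        · exact absurd (h0 ▸ hζη) ((not_lt_zero (a := ζ)))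
        · exact absurd ⟨ζ0, by rw [hrlen, ← hζ0, Ordinal.add_one_eq_succ]⟩ hηsucc
        · exact hlim.succ_lt hζη
    exact agreeFull_odd hreg hpow σ hη hζ1η

theorem resPlay_runFull {x : SeqFull ν.ord ν.ord} {δ : Ordinal.{u}} (hδ : δ < ν.ord) :
    resPlay (RunFull hreg hpow σ x) (2 * δ + 1) =
      RunTo hreg hpow (fdef hreg hpow σ) (x.res (δ + 1)) := by
  have hδ1 : δ + 1 < ν.ord := succ_lt_ord hreg hδ
  have hrlen : (x.res (δ + 1)).len = δ + 1 := res_len hreg x hδ1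
  have hpl : plen (x.res (δ + 1)) = 2 * δ + 1 := plen_succ hrlen
  funext α
  rw [resPlay]
  by_cases hα : α < 2 * δ + 1
  · rw [if_pos hα]
    have := agreeFull_below_plen hreg hpow σ hδ1 α (by rw [hpl]; exact hα)
    exact this
  · rw [if_neg hα]
    push_neg at hα
    refine (runTo_undef hreg hpow _ ?_ ?_).symm
    · intro ζ hζ hc
      rw [hrlen] at hζ
      have h1 : (2 : Ordinal.{u}) * ζ ≤ 2 * δ := two_mul_le_two_mul.mpr (lt_add_one_iff'.mp hζ)
      exact absurd (hc ▸ hα) (not_le.mpr (lt_of_le_of_lt h1 (lt_add_one _)))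
    · intro ζ hζ hc
      rw [hrlen] at hζ
      have hζδ : ζ < δ := add_one_lt_add_one_iff.mp hζ
      exact absurd (hc ▸ hα) (not_le.mpr (odd_lt_odd hζδ))

theorem fdef_avoid (hleg : LegalII (SeqLT.empty ν.ord ν.ord) σ)
    {A : Set (SeqFull ν.ord ν.ord)}
    (hwin : ∀ p : Play ν.ord ν.ord, IsPos (SeqLT.empty ν.ord ν.ord) p ν.ord →
      FollowsII σ p ν.ord → ∃ x, IsOutcome p x ∧ x ∉ A) :
    ∀ x y, FStarVal (fdef hreg hpow σ) x y → y ∉ A := by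
  intro x y hFstar
  set p := RunFull hreg hpow σ x with hp
  have hfol : FollowsII σ p ν.ord := by
    intro α hαν hodd
    obtain ⟨δ, rfl⟩ := hodd
    have hδν : δ < ν.ord := lt_of_le_of_lt (le_two_mul δ) ((lt_add_one _).trans hαν)
    have hδ1 : δ + 1 < ν.ord := succ_lt_ord hreg hδν
    rw [hp]
    rw [runFull_odd hreg hpow σ hδ1]
    have hres : resPlay (RunFull hreg hpow σ x) (2 * δ + 1) =
        RunTo hreg hpow (fdef hreg hpow σ) (x.res (δ + 1)) := resPlay_runFull hreg hpow σ hδν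
    rw [hres]
    exact fdef_succ hreg hpow σ (res_len hreg x hδ1)
  have hpos : IsPos (SeqLT.empty ν.ord ν.ord) p ν.ord := by
    refine ⟨?_, fun _ => empty_le _, ?_⟩
    · intro α β hαβ hβ
      obtain ⟨ζβ, hζν, hβlt⟩ : ∃ ζβ, ζβ < ν.ord ∧ β < 2 * ζβ + 1 + 1 := by
        rcases even_or_odd β with ⟨ζ, rfl⟩ | ⟨ζ, rfl⟩
        · exact ⟨ζ, lt_of_le_of_lt (le_two_mul ζ) hβ, (lt_add_one _).trans (lt_add_one _)⟩
        · exact ⟨ζ, lt_of_le_of_lt (le_two_mul ζ) ((lt_add_one _).trans hβ), lt_add_one _⟩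
      have hη : ζβ + 2 < ν.ord := by
        rw [add_two_eq]
        exact succ_lt_ord hreg (succ_lt_ord hreg hζν)
      have hwInv := inv_all hreg hpow σ hleg (x.res (ζβ + 2))
      have hplw : plen (x.res (ζβ + 2)) = 2 * (ζβ + 1) + 1 :=
        plen_succ (by rw [res_len hreg x hη, add_two_eq])
      have hβpl : β < plen (x.res (ζβ + 2)) := by
        rw [hplw, two_mul_succ']
        exact hβlt.trans (lt_add_one _)
      have hagr := agreeFull_below_plen hreg hpow σ (x := x) hη
      rw [hp, hagr α (hαβ.trans hβpl), hagr β hβpl]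
      exact hwInv.2.1.1 α β hαβ hβpl
    · intro α hα
      refine runFull_undef hreg hpow σ ?_ ?_
      · intro ζ hζ hc
        exact absurd (hc ▸ hα) (not_le.mpr (two_mul_lt_ord hreg hζ))
      · intro ζ hζ hc
        have hζν : ζ < ν.ord := (lt_add_one ζ).trans hζ
        exact absurd (hc ▸ hα) (not_le.mpr (odd_lt_ord hreg hζν))
  obtain ⟨x', hout', hx'⟩ := hwin p hpos hfol
  have hyOut : IsOutcome p y := by
    constructor
    · intro α hαν
      have hODD : ∀ δ, 2 * δ + 1 < ν.ord → (p (2 * δ + 1)).prefixOf y := by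
        intro δ hδν'
        have hδν : δ < ν.ord := lt_of_le_of_lt (le_two_mul δ) ((lt_add_one _).trans hδν')
        have hδ1 : δ + 1 < ν.ord := succ_lt_ord hreg hδν
        rw [hp, runFull_odd hreg hpow σ hδ1]
        exact hFstar.1 (δ + 1) hδ1
      rcases even_or_odd α with ⟨δ, rfl⟩ | ⟨δ, rfl⟩
      · have hδν : δ < ν.ord := lt_of_le_of_lt (le_two_mul δ) hαν
        have h1 := hpos.1 (2 * δ) (2 * δ + 1) (lt_add_one _) (odd_lt_ord hreg hδν)
        exact prefix_of_le h1.1 (hODD δ (odd_lt_ord hreg hδν))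
      · exact hODD δ hαν
    · intro β hβν
      obtain ⟨α, hαν, hβlen⟩ := hFstar.2 β hβν
      have hα1 : α + 1 < ν.ord := succ_lt_ord hreg hαν
      have hss : (x.res α).slt (x.res (α + 1)) := res_slt_res hreg x (lt_add_one α) hα1
      have hFle : (fdef hreg hpow σ (x.res α)).len ≤
          (fdef hreg hpow σ (x.res (α + 1))).len :=
        (fdef_hom hreg hpow σ hleg _ _ hss).1.1
      refine ⟨2 * α + 1, odd_lt_ord hreg hαν, ?_⟩
      rw [hp, runFull_odd hreg hpow σ hα1]
      exact lt_of_lt_of_le hβlen hFle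
  intro hyA
  exact hx' (outcome_unique hyOut hout' ▸ hyA)

end BMAux
/-- For an infinite regular cardinal `ν` with `ν^{<ν} = ν` and `A ⊆ ν^ν`: player II has a
winning strategy in the Banach–Mazur game `G_ν(A)` iff there is a dense continuous
homomorphism `f : ν^{<ν} → ν^{<ν}` with `ran f* ⊆ ν^ν ∖ A` and `f ∅ = ∅`. -/
theorem statement8 (ν : Cardinal.{u}) (hreg : ν.IsRegular)
    (hpow : Cardinal.powerlt ν ν = ν) (A : Set (SeqFull ν.ord ν.ord)) :
    WinIIStrat (SeqLT.empty ν.ord ν.ord) A ↔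
      ∃ f : SeqLT ν.ord ν.ord → SeqLT ν.ord ν.ord,
        IsHom f ∧ IsDenseMap f ∧ IsContinuousMap f ∧
          (∀ x y, FStarVal f x y → y ∉ A) ∧
          f (SeqLT.empty ν.ord ν.ord) = SeqLT.empty ν.ord ν.ord := by
  constructor
  · rintro ⟨σ, hleg, hwin⟩
    exact ⟨BMAux.fdef hreg hpow σ, BMAux.fdef_hom hreg hpow σ hleg,
      BMAux.fdef_dense hreg hpow σ hleg, BMAux.fdef_cont hreg hpow σ hleg,
      BMAux.fdef_avoid hreg hpow σ hleg hwin, BMAux.fdef_emptyval hreg hpow σ hleg⟩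
  · rintro ⟨f, hhom, hdense, hcont, havoid, hf0⟩
    exact BMAux.win_of_hom hreg A f hhom hdense hcont hf0 havoid

end
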